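/- arXiv:2504.18427 — 2 statements merged into one kernel-verified Lean document; each statement's English description precedes it below -/
import Mathlib

section
/- Let G be a graph on n vertices, let λ > 0, and let 𝒯 = (T, {X_t}_{t∈V(T)}) be a separator tree of G. For each vertex v of G, let t_v be the unique node of T with v ∈ X_{t_v}, and let A_v be the union of the bags X_t over all ancestors t of t_v in T (including t_v itself). Then there exists a set Γ of canonical paths between the independent sets of G whose congestion with respect to the Glauber dynamics with fugacity λ satisfies ρ(Γ) ≤ 4n² · λ̃^{2α+1} · max_{v∈V(G)} |𝓘(G[A_v])|², where λ̃ = e^{|ln λ|} = max(λ, 1/λ) and α = max_{v∈V(G)} α(G[A_v]). -/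
open Finset

section HardCoreDefs

variable {V : Type*} [Fintype V] [DecidableEq V]

/-- `I` is an independent set of the simple graph `G`. -/
def IsIndep (G : SimpleGraph V) (I : Finset V) : Prop :=
  ∀ u ∈ I, ∀ v ∈ I, ¬ G.Adj u v

open Classical in
/-- The set `𝓘(G)` of independent sets of `G`. -/
noncomputable def indepSets (G : SimpleGraph V) : Finset (Finset V) :=
  Finset.univ.filter fun I => IsIndep G I

/-- The hard-core partition function `Z_G(λ)`. -/
noncomputable def Z (G : SimpleGraph V) (lam : ℝ) : ℝ :=
  ∑ I ∈ indepSets G, lam ^ I.card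

/-- The hard-core distribution `π_{G,λ}`. -/
noncomputable def hardCore (G : SimpleGraph V) (lam : ℝ) (I : Finset V) : ℝ :=
  lam ^ I.card / Z G lam

open Classical in
/-- The transition probabilities of the Glauber dynamics on independent sets of `G`
with fugacity `λ`. -/
noncomputable def glauberP (G : SimpleGraph V) (lam : ℝ) (I J : Finset V) : ℝ :=
  (1 / (Fintype.card V : ℝ)) * ∑ v : V,
    if v ∈ I then
      (if J = I.erase v then 1 / (lam + 1) else if J = I then lam / (lam + 1) else 0)
    else if IsIndep G (insert v I) then
      (if J = insert v I then lam / (lam + 1) else if J = I then 1 / (lam + 1) else 0)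
    else (if J = I then 1 else 0)

/-- One step of the Glauber dynamics, applied to a distribution on independent sets. -/
noncomputable def stepDist (G : SimpleGraph V) (lam : ℝ) (μ : Finset V → ℝ) :
    Finset V → ℝ :=
  fun J => ∑ I ∈ indepSets G, μ I * glauberP G lam I J

/-- The distribution of the Glauber dynamics after `t` steps started from `I`. -/
noncomputable def distAfter (G : SimpleGraph V) (lam : ℝ) (I : Finset V) (t : ℕ) :
    Finset V → ℝ :=
  (stepDist G lam)^[t] (fun J => if J = I then 1 else 0)

/-- Total variation distance between two distributions on independent sets. -/
noncomputable def tvDist (G : SimpleGraph V) (μ ν : Finset V → ℝ) : ℝ :=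
  (1 / 2) * ∑ I ∈ indepSets G, |μ I - ν I|

/-- The mixing time `τ_{G,λ}` of the Glauber dynamics. -/
noncomputable def mixingTime (G : SimpleGraph V) (lam : ℝ) : ℕ :=
  sInf {t : ℕ | ∀ I ∈ indepSets G,
    tvDist G (distAfter G lam I t) (hardCore G lam) ≤ 1 / 4}

/-- `λ̃ = e^{|ln λ|} = max (λ, 1/λ)`. -/
noncomputable def lamTilde (lam : ℝ) : ℝ := max lam lam⁻¹

/-- The independence number of the subgraph of `G` induced by `S`. -/
noncomputable def alphaOn (G : SimpleGraph V) (S : Finset V) : ℕ :=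
  ((indepSets G).filter fun I => I ⊆ S).sup Finset.card

/-- The number of independent sets of the subgraph of `G` induced by `S`. -/
noncomputable def numIndepOn (G : SimpleGraph V) (S : Finset V) : ℕ :=
  ((indepSets G).filter fun I => I ⊆ S).card

/-- The subgraph of `G` induced by a finite vertex set `S`. -/
def inducedF (G : SimpleGraph V) (S : Finset V) : SimpleGraph {x : V // x ∈ S} :=
  SimpleGraph.comap Subtype.val G

end HardCoreDefs
/-- A rooted full binary tree, each of whose nodes carries a bag of vertices. -/
inductive BTree (V : Type*) where
  | leaf : Finset V → BTree V
  | node : Finset V → BTree V → BTree V → BTree V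

section BTreeDefs

variable {V : Type*} [Fintype V] [DecidableEq V]

/-- The set `V_t` of vertices of `G` appearing in the bags of the subtree rooted at `t`. -/
def BTree.verts : BTree V → Finset V
  | .leaf b => b
  | .node b l r => b ∪ l.verts ∪ r.verts

end BTreeDefs
section SepTree

variable {V : Type*} [Fintype V] [DecidableEq V]

/-- `t` is a separator tree of `G` (restricted to the vertices `t.verts`): at every internal
node the bag, together with the vertex sets of the two subtrees, partitions the vertices below,
there are no edges between the two subtrees, and every leaf carries at most one vertex. -/
def IsSepTree (G : SimpleGraph V) : BTree V → Prop
  | .leaf b => b.card ≤ 1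
  | .node b l r =>
      Disjoint b l.verts ∧ Disjoint b r.verts ∧ Disjoint l.verts r.verts ∧
      (∀ u ∈ l.verts, ∀ v ∈ r.verts, ¬ G.Adj u v) ∧
      IsSepTree G l ∧ IsSepTree G r

/-- The set `A_v`: the union of the bags of the ancestors (including itself) of the unique
node whose bag contains `v`. -/
def BTree.anc (v : V) : BTree V → Finset V
  | .leaf b => b
  | .node b l r =>
      if v ∈ b then b else b ∪ (if v ∈ l.verts then BTree.anc v l else BTree.anc v r)

end SepTree
section CanonicalPaths

variable {V : Type*} [Fintype V] [DecidableEq V]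

/-- The transition `(W, W')` is used by the path `l`, i.e. `W` and `W'` appear consecutively. -/
def usesEdge (l : List (Finset V)) (W W' : Finset V) : Prop :=
  (W, W') ∈ l.zip l.tail

/-- `l` is a path from `K` to `L` in the reconfiguration graph `𝓖(G)`: it starts at `K`,
ends at `L`, visits only independent sets, and consecutive sets have symmetric difference of
size exactly one. -/
def IsReconfPath (G : SimpleGraph V) (K L : Finset V) (l : List (Finset V)) : Prop :=
  l.head? = some K ∧ l.getLast? = some L ∧
  (∀ I ∈ l, IsIndep G I) ∧ List.Chain' (fun I J => (symmDiff I J).card = 1) l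

open Classical in
/-- The congestion `ρ(Γ, e)` through the transition `e = (W, W')` of the family of canonical
paths `γ`, for the Glauber dynamics with fugacity `λ`: `(π(W) P(W,W'))⁻¹` times the sum over
pairs `(K, L)` whose canonical path uses `e` of `π(K) π(L) |γ_{K,L}|`. -/
noncomputable def congestionAt (G : SimpleGraph V) (lam : ℝ)
    (γ : Finset V → Finset V → List (Finset V)) (W W' : Finset V) : ℝ :=
  (1 / (hardCore G lam W * glauberP G lam W W')) *
    ∑ K ∈ indepSets G, ∑ L ∈ indepSets G,
      if usesEdge (γ K L) W W' then
        hardCore G lam K * hardCore G lam L * (((γ K L).length - 1 : ℕ) : ℝ)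
      else 0

end CanonicalPaths

set_option linter.unusedSectionVars false

section AuxBasic

variable {V : Type*} [Fintype V] [DecidableEq V] {G : SimpleGraph V}

lemma isIndep_subset {I J : Finset V} (h : IsIndep G I) (hJ : J ⊆ I) : IsIndep G J :=
  fun u hu v hv => h u (hJ hu) v (hJ hv)

lemma mem_indepSets {I : Finset V} : I ∈ indepSets G ↔ IsIndep G I := by
  classical
  simp [indepSets]

lemma isIndep_union {A B : Finset V} (hA : IsIndep G A) (hB : IsIndep G B)
    (hAB : ∀ a ∈ A, ∀ b ∈ B, ¬ G.Adj a b) : IsIndep G (A ∪ B) := by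
  intro u hu v hv
  simp only [Finset.mem_union] at hu hv
  rcases hu with hu | hu <;> rcases hv with hv | hv
  · exact hA u hu v hv
  · exact hAB u hu v hv
  · exact fun hadj => hAB v hv u hu hadj.symm
  · exact hB u hu v hv

lemma empty_mem_indepSets : (∅ : Finset V) ∈ indepSets G :=
  mem_indepSets.2 (by intro u hu; simp at hu)

lemma Z_pos {lam : ℝ} (hlam : 0 < lam) : 0 < Z G lam :=
  Finset.sum_pos (fun _ _ => pow_pos hlam _) ⟨∅, empty_mem_indepSets⟩

lemma hardCore_pos {lam : ℝ} (hlam : 0 < lam) (I : Finset V) : 0 < hardCore G lam I :=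
  div_pos (pow_pos hlam _) (Z_pos hlam)

lemma sum_hardCore {lam : ℝ} (hlam : 0 < lam) :
    ∑ I ∈ indepSets G, hardCore G lam I = 1 := by
  unfold hardCore
  rw [← Finset.sum_div]
  exact div_self (ne_of_gt (Z_pos hlam))

lemma one_le_lamTilde {lam : ℝ} (hlam : 0 < lam) : 1 ≤ lamTilde lam := by
  rcases le_or_gt 1 lam with h | h
  · exact le_max_of_le_left h
  · exact le_max_of_le_right (by rw [le_inv_comm₀ one_pos hlam]; simpa using h.le)

lemma lamTilde_pos {lam : ℝ} (hlam : 0 < lam) : 0 < lamTilde lam :=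
  lt_of_lt_of_le one_pos (one_le_lamTilde hlam)

end AuxBasic

section AuxList

variable {V : Type*} [DecidableEq V]

/-- Path obtained by removing the vertices of `l` one by one from `S`. -/
def remSeq (S : Finset V) : List V → List (Finset V)
  | [] => [S]
  | a :: l => S :: remSeq (S.erase a) l

/-- Path obtained by inserting the vertices of `l` one by one into `S`. -/
def addSeq (S : Finset V) : List V → List (Finset V)
  | [] => [S]
  | a :: l => S :: addSeq (insert a S) l

lemma remSeq_ne_nil {S : Finset V} {l : List V} : remSeq S l ≠ [] := by
  cases l <;> simp [remSeq]

lemma addSeq_ne_nil {S : Finset V} {l : List V} : addSeq S l ≠ [] := by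
  cases l <;> simp [addSeq]

lemma remSeq_head? (S : Finset V) (l : List V) : (remSeq S l).head? = some S := by
  cases l <;> rfl

lemma addSeq_head? (S : Finset V) (l : List V) : (addSeq S l).head? = some S := by
  cases l <;> rfl

lemma getLast?_cons_of_ne_nil {α : Type*} {a : α} {l : List α} (h : l ≠ []) :
    (a :: l).getLast? = l.getLast? := by
  cases l with
  | nil => exact absurd rfl h
  | cons b m => exact List.getLast?_cons_cons

lemma remSeq_getLast? (S : Finset V) (l : List V) :
    (remSeq S l).getLast? = some (S \ l.toFinset) := by
  induction l generalizing S with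
  | nil => simp [remSeq]
  | cons a l ih =>
    rw [remSeq, getLast?_cons_of_ne_nil remSeq_ne_nil, ih]
    congr 1
    ext x
    simp only [Finset.mem_sdiff, Finset.mem_erase, List.toFinset_cons, Finset.mem_insert,
      List.mem_toFinset]
    tauto

lemma addSeq_getLast? (S : Finset V) (l : List V) :
    (addSeq S l).getLast? = some (S ∪ l.toFinset) := by
  induction l generalizing S with
  | nil => simp [addSeq]
  | cons a l ih =>
    rw [addSeq, getLast?_cons_of_ne_nil addSeq_ne_nil, ih]
    congr 1
    ext x
    simp only [Finset.mem_union, Finset.mem_insert, List.toFinset_cons, List.mem_toFinset]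
    tauto

lemma remSeq_length (S : Finset V) (l : List V) : (remSeq S l).length = l.length + 1 := by
  induction l generalizing S with
  | nil => rfl
  | cons a l ih => simp [remSeq, ih]

lemma addSeq_length (S : Finset V) (l : List V) : (addSeq S l).length = l.length + 1 := by
  induction l generalizing S with
  | nil => rfl
  | cons a l ih => simp [addSeq, ih]

lemma remSeq_mem {S : Finset V} {l : List V} :
    ∀ T ∈ remSeq S l, S \ l.toFinset ⊆ T ∧ T ⊆ S := by
  induction l generalizing S with
  | nil => intro T hT; simp [remSeq] at hT; subst hT; simp
  | cons a l ih =>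
    intro T hT
    rw [remSeq, List.mem_cons] at hT
    have hsd : S \ (a :: l).toFinset = S.erase a \ l.toFinset := by
      ext x
      simp only [Finset.mem_sdiff, Finset.mem_erase, List.toFinset_cons, Finset.mem_insert,
        List.mem_toFinset]
      tauto
    rcases hT with rfl | hT
    · exact ⟨Finset.sdiff_subset, subset_rfl⟩
    · obtain ⟨h1, h2⟩ := ih T hT
      exact ⟨by rw [hsd]; exact h1, h2.trans (Finset.erase_subset _ _)⟩

lemma addSeq_mem {S : Finset V} {l : List V} :
    ∀ T ∈ addSeq S l, S ⊆ T ∧ T ⊆ S ∪ l.toFinset := by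
  induction l generalizing S with
  | nil => intro T hT; simp [addSeq] at hT; subst hT; simp
  | cons a l ih =>
    intro T hT
    rw [addSeq, List.mem_cons] at hT
    have hsd : insert a S ∪ l.toFinset = S ∪ (a :: l).toFinset := by
      ext x
      simp only [Finset.mem_union, Finset.mem_insert, List.toFinset_cons, List.mem_toFinset]
      tauto
    rcases hT with rfl | hT
    · exact ⟨subset_rfl, Finset.subset_union_left⟩
    · obtain ⟨h1, h2⟩ := ih T hT
      exact ⟨(Finset.subset_insert a S).trans h1, by rw [← hsd]; exact h2⟩

lemma symmDiff_card_erase {S : Finset V} {a : V} (ha : a ∈ S) :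
    (symmDiff S (S.erase a)).card = 1 := by
  have : symmDiff S (S.erase a) = {a} := by
    ext x
    simp only [Finset.mem_symmDiff, Finset.mem_erase, Finset.mem_singleton]
    constructor
    · rintro (⟨h1, h2⟩ | ⟨⟨h1, h2⟩, h3⟩)
      · by_contra hx; exact h2 ⟨hx, h1⟩
      · exact absurd h2 (absurd h2 fun _ => h3 h2)
    · rintro rfl; exact Or.inl ⟨ha, fun h => h.1 rfl⟩
  rw [this, Finset.card_singleton]

lemma symmDiff_card_insert {S : Finset V} {a : V} (ha : a ∉ S) :
    (symmDiff S (insert a S)).card = 1 := by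
  have : symmDiff S (insert a S) = {a} := by
    ext x
    simp only [Finset.mem_symmDiff, Finset.mem_insert, Finset.mem_singleton]
    constructor
    · rintro (⟨h1, h2⟩ | ⟨h1, h2⟩)
      · exact absurd (Or.inr h1) h2
      · rcases h1 with rfl | h1
        · rfl
        · exact absurd h1 h2
    · rintro rfl
      exact Or.inr ⟨Or.inl rfl, ha⟩
  rw [this, Finset.card_singleton]

lemma remSeq_chain' {S : Finset V} {l : List V} (hnd : l.Nodup) (hl : ∀ x ∈ l, x ∈ S) :
    List.Chain' (fun I J => (symmDiff I J).card = 1) (remSeq S l) := by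
  induction l generalizing S with
  | nil => simp [remSeq, List.Chain', List.isChain_singleton]
  | cons a l ih =>
    show List.IsChain _ _
    rw [remSeq, List.isChain_cons]
    constructor
    · intro y hy
      rw [remSeq_head? (S.erase a) l] at hy
      cases hy
      exact symmDiff_card_erase (hl a List.mem_cons_self)
    · refine ih (List.Nodup.of_cons hnd) ?_
      intro x hx
      refine Finset.mem_erase.2 ⟨?_, hl x (List.mem_cons_of_mem a hx)⟩
      rintro rfl
      exact (List.nodup_cons.1 hnd).1 hx

lemma addSeq_chain' {S : Finset V} {l : List V} (hnd : l.Nodup) (hl : ∀ x ∈ l, x ∉ S) :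
    List.Chain' (fun I J => (symmDiff I J).card = 1) (addSeq S l) := by
  induction l generalizing S with
  | nil => simp [addSeq, List.Chain', List.isChain_singleton]
  | cons a l ih =>
    show List.IsChain _ _
    rw [addSeq, List.isChain_cons]
    constructor
    · intro y hy
      rw [addSeq_head? (insert a S) l] at hy
      cases hy
      exact symmDiff_card_insert (hl a List.mem_cons_self)
    · refine ih (List.Nodup.of_cons hnd) ?_
      intro x hx
      simp only [Finset.mem_insert, not_or]
      exact ⟨fun h => (List.nodup_cons.1 hnd).1 (h ▸ hx), hl x (List.mem_cons_of_mem a hx)⟩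

lemma usesEdge_cons {a : Finset V} {l : List (Finset V)} {W W' : Finset V} :
    usesEdge (a :: l) W W' ↔ (a = W ∧ l.head? = some W') ∨ usesEdge l W W' := by
  cases l with
  | nil => simp [usesEdge]
  | cons b m =>
    simp only [usesEdge, List.tail_cons, List.zip_cons_cons, List.mem_cons, List.head?_cons,
      Prod.mk.injEq, Option.some.injEq]
    constructor
    · rintro (⟨h1, h2⟩ | h)
      · exact Or.inl ⟨h1.symm, h2.symm⟩
      · exact Or.inr h
    · rintro (⟨h1, h2⟩ | h)
      · exact Or.inl ⟨h1.symm, h2.symm⟩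
      · exact Or.inr h

lemma usesEdge_mem {l : List (Finset V)} {W W' : Finset V} (h : usesEdge l W W') :
    W ∈ l ∧ W' ∈ l := by
  induction l with
  | nil => simp [usesEdge] at h
  | cons a l ih =>
    rcases usesEdge_cons.1 h with ⟨rfl, h2⟩ | h
    · exact ⟨List.mem_cons_self, List.mem_cons_of_mem _ (List.mem_of_mem_head? h2)⟩
    · obtain ⟨h1, h2⟩ := ih h
      exact ⟨List.mem_cons_of_mem _ h1, List.mem_cons_of_mem _ h2⟩

lemma usesEdge_tail {l : List (Finset V)} {W W' : Finset V} (h : usesEdge l.tail W W') :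
    usesEdge l W W' := by
  cases l with
  | nil => simpa using h
  | cons a l => exact usesEdge_cons.2 (Or.inr h)

lemma usesEdge_append {p q : List (Finset V)} {W W' : Finset V}
    (h : usesEdge (p ++ q) W W') :
    usesEdge p W W' ∨ usesEdge q W W' ∨ (p.getLast? = some W ∧ q.head? = some W') := by
  induction p with
  | nil => simp at h; exact Or.inr (Or.inl h)
  | cons a p ih =>
    rw [List.cons_append, usesEdge_cons] at h
    rcases h with ⟨rfl, h2⟩ | h
    · cases p with
      | nil =>
        simp only [List.nil_append] at h2
        exact Or.inr (Or.inr ⟨rfl, h2⟩)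
      | cons b m =>
        simp only [List.cons_append, List.head?_cons, Option.some.injEq] at h2
        exact Or.inl (usesEdge_cons.2 (Or.inl ⟨rfl, by simp [h2]⟩))
    · rcases ih h with h | h | ⟨h1, h2⟩
      · exact Or.inl (usesEdge_cons.2 (Or.inr h))
      · exact Or.inr (Or.inl h)
      · refine Or.inr (Or.inr ⟨?_, h2⟩)
        rw [getLast?_cons_of_ne_nil, h1]
        intro hnil
        rw [hnil] at h1
        simp at h1

/-- Concatenation of two paths sharing an endpoint. -/
def glue (p q : List (Finset V)) : List (Finset V) := p ++ q.tail

lemma glue_head? {p q : List (Finset V)} (hp : p ≠ []) : (glue p q).head? = p.head? := by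
  unfold glue
  rw [List.head?_append]
  cases p with
  | nil => exact absurd rfl hp
  | cons a l => simp

lemma glue_getLast? {p q : List (Finset V)} (h : p.getLast? = q.head?) :
    (glue p q).getLast? = q.getLast? := by
  unfold glue
  cases q with
  | nil =>
    simp only [List.head?_nil] at h
    simp [List.getLast?_eq_none_iff.1 h]
  | cons x q' =>
    cases q' with
    | nil => simpa using h
    | cons y q'' =>
      rw [List.getLast?_append]
      simp only [List.tail_cons]
      rw [List.getLast?_cons_cons]
      cases hq : (y :: q'').getLast? with
      | none => simp at hq
      | some z => simp

lemma glue_chain' {R : Finset V → Finset V → Prop} {p q : List (Finset V)}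
    (hp : List.Chain' R p) (hq : List.Chain' R q) (h : p.getLast? = q.head?) :
    List.Chain' R (glue p q) := by
  refine List.IsChain.append hp (List.IsChain.tail hq) ?_
  intro x hx y hy
  rw [h] at hx
  cases q with
  | nil => simp at hx
  | cons a q' =>
    simp only [List.head?_cons, Option.mem_def, Option.some.injEq] at hx
    subst hx
    simp only [List.tail_cons] at hy
    exact (List.isChain_cons.1 hq).1 y hy

lemma glue_mem {p q : List (Finset V)} {T : Finset V} (h : T ∈ glue p q) :
    T ∈ p ∨ T ∈ q := by
  unfold glue at h
  rcases List.mem_append.1 h with h | h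
  · exact Or.inl h
  · exact Or.inr (List.mem_of_mem_tail h)

lemma glue_usesEdge {p q : List (Finset V)} {W W' : Finset V}
    (h : p.getLast? = q.head?) (hu : usesEdge (glue p q) W W') :
    usesEdge p W W' ∨ usesEdge q W W' := by
  rcases usesEdge_append hu with h1 | h2 | ⟨hl, hh⟩
  · exact Or.inl h1
  · exact Or.inr (usesEdge_tail h2)
  · right
    rw [h] at hl
    cases q with
    | nil => simp at hl
    | cons x q' =>
      simp only [List.head?_cons, Option.some.injEq] at hl
      subst hl
      simp only [List.tail_cons] at hh
      exact usesEdge_cons.2 (Or.inl ⟨rfl, hh⟩)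

lemma glue_ne_nil {p q : List (Finset V)} (hp : p ≠ []) : glue p q ≠ [] := by
  unfold glue
  simp [hp]

end AuxList
section AuxTree

variable {V : Type*} [Fintype V] [DecidableEq V] {G : SimpleGraph V}

/-- The set of "finished" vertices when the walk is about to touch `v` in phase `ph`
(`ph = false`: removal phase; `ph = true`: insertion phase). -/
def BTree.done (v : V) (ph : Bool) : BTree V → Finset V
  | .leaf _ => ∅
  | .node b l r =>
      if v ∈ b then (if ph then l.verts ∪ r.verts else ∅)
      else if v ∈ l.verts then l.done v ph
      else l.verts ∪ r.done v ph


lemma bag_subset_verts {b : Finset V} {l r : BTree V} : b ⊆ (BTree.node b l r).verts := by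
  intro x hx; rw [BTree.verts]; simp [hx]

lemma left_subset_verts {b : Finset V} {l r : BTree V} : l.verts ⊆ (BTree.node b l r).verts := by
  intro x hx; rw [BTree.verts]; simp [hx]

lemma right_subset_verts {b : Finset V} {l r : BTree V} : r.verts ⊆ (BTree.node b l r).verts := by
  intro x hx; rw [BTree.verts]; simp [hx]

lemma anc_subset_verts (t : BTree V) (v : V) : t.anc v ⊆ t.verts := by
  induction t with
  | leaf b => exact subset_rfl
  | node b l r ihl ihr =>
    rw [BTree.anc]
    intro x hx
    rw [BTree.verts]
    simp only [Finset.mem_union]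
    split at hx
    · tauto
    · rcases Finset.mem_union.1 hx with hx | hx
      · tauto
      · split at hx
        · exact Or.inl (Or.inr (ihl hx))
        · exact Or.inr (ihr hx)

lemma mem_anc {t : BTree V} {v : V} (hv : v ∈ t.verts) : v ∈ t.anc v := by
  induction t with
  | leaf b => exact hv
  | node b l r ihl ihr =>
    rw [BTree.anc]
    rw [BTree.verts, Finset.mem_union, Finset.mem_union] at hv
    by_cases hb : v ∈ b
    · rw [if_pos hb]; exact hb
    · rw [if_neg hb]
      by_cases hl : v ∈ l.verts
      · rw [if_pos hl]
        exact Finset.mem_union_right _ (ihl hl)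
      · rw [if_neg hl]
        rcases hv with (hv | hv) | hv
        · exact absurd hv hb
        · exact absurd hv hl
        · exact Finset.mem_union_right _ (ihr hv)

lemma done_subset_verts (t : BTree V) (v : V) (ph : Bool) : t.done v ph ⊆ t.verts := by
  induction t with
  | leaf b => exact Finset.empty_subset _
  | node b l r ihl ihr =>
    rw [BTree.done]
    intro x hx
    rw [BTree.verts]
    simp only [Finset.mem_union]
    split at hx
    · split at hx
      · rcases Finset.mem_union.1 hx with h | h
        · tauto
        · tauto
      · simp at hx
    · split at hx
      · exact Or.inl (Or.inr (ihl hx))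
      · rcases Finset.mem_union.1 hx with h | h
        · tauto
        · exact Or.inr (ihr h)

lemma disjoint_anc_done {t : BTree V} (ht : IsSepTree G t) (v : V) (ph : Bool) :
    Disjoint (t.anc v) (t.done v ph) := by
  induction t with
  | leaf b => simp [BTree.done, BTree.anc]
  | node b l r ihl ihr =>
    obtain ⟨hbl, hbr, hlr, hcross, htl, htr⟩ := ht
    rw [BTree.done, BTree.anc]
    by_cases hb : v ∈ b
    · rw [if_pos hb, if_pos hb]
      split
      · exact Finset.disjoint_union_right.2 ⟨hbl, hbr⟩
      · exact Finset.disjoint_empty_right _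
    · rw [if_neg hb, if_neg hb]
      by_cases hl : v ∈ l.verts
      · rw [if_pos hl, if_pos hl]
        refine Finset.disjoint_union_left.2 ⟨?_, ?_⟩
        · exact hbl.mono_right (done_subset_verts l v ph)
        · exact ihl htl
      · rw [if_neg hl, if_neg hl]
        refine Finset.disjoint_union_left.2 ⟨?_, ?_⟩
        · exact Finset.disjoint_union_right.2
            ⟨hbl, hbr.mono_right (done_subset_verts r v ph)⟩
        · refine Finset.disjoint_union_right.2 ⟨?_, ?_⟩
          · exact hlr.symm.mono_left (anc_subset_verts r v)
          · exact ihr htr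

/-- The canonical reconfiguration path, built recursively along a separator tree.
`C` is the frozen context outside the current subtree. -/
noncomputable def pathRec : BTree V → Finset V → Finset V → Finset V → List (Finset V)
  | .leaf _, C, K, L => glue (remSeq (C ∪ K) K.toList) (addSeq C L.toList)
  | .node b l r, C, K, L =>
      glue (remSeq (C ∪ K) (K ∩ b).toList)
        (glue (pathRec l (C ∪ (K ∩ r.verts)) (K ∩ l.verts) (L ∩ l.verts))
          (glue (pathRec r (C ∪ (L ∩ l.verts)) (K ∩ r.verts) (L ∩ r.verts))
            (addSeq (C ∪ (L ∩ l.verts) ∪ (L ∩ r.verts)) (L ∩ b).toList)))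

/-- Invariants carried through the recursive path construction. -/
structure PHyp (G : SimpleGraph V) (t : BTree V) (C K L : Finset V) : Prop where
  hK : K ⊆ t.verts
  hL : L ⊆ t.verts
  hC : Disjoint C t.verts
  hCK : IsIndep G (C ∪ K)
  hCL : IsIndep G (C ∪ L)

lemma pathRec_ne_nil {t : BTree V} {C K L : Finset V} : pathRec t C K L ≠ [] := by
  cases t with
  | leaf b => rw [pathRec]; exact glue_ne_nil remSeq_ne_nil
  | node b l r => rw [pathRec]; exact glue_ne_nil remSeq_ne_nil

lemma pathRec_head? (t : BTree V) (C K L : Finset V) :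
    (pathRec t C K L).head? = some (C ∪ K) := by
  cases t with
  | leaf b => rw [pathRec, glue_head? remSeq_ne_nil, remSeq_head?]
  | node b l r => rw [pathRec, glue_head? remSeq_ne_nil, remSeq_head?]

lemma PHyp.left {b : Finset V} {l r : BTree V} {C K L : Finset V}
    (h : PHyp G (.node b l r) C K L) (ht : IsSepTree G (.node b l r)) :
    PHyp G l (C ∪ (K ∩ r.verts)) (K ∩ l.verts) (L ∩ l.verts) := by
  obtain ⟨hbl, hbr, hlr, hcross, htl, htr⟩ := ht
  have hKparts : K ∩ l.verts ⊆ K := Finset.inter_subset_left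
  refine ⟨Finset.inter_subset_right, Finset.inter_subset_right, ?_, ?_, ?_⟩
  · refine Finset.disjoint_union_left.2 ⟨?_, ?_⟩
    · exact h.hC.mono_right left_subset_verts
    · exact hlr.symm.mono_left Finset.inter_subset_right
  · refine isIndep_subset h.hCK ?_
    exact Finset.union_subset
      (Finset.union_subset Finset.subset_union_left
        (Finset.inter_subset_left.trans Finset.subset_union_right))
      (Finset.inter_subset_left.trans Finset.subset_union_right)
  · refine isIndep_union (isIndep_subset h.hCK ?_) (isIndep_subset h.hCL ?_) ?_
    · exact Finset.union_subset Finset.subset_union_left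
        (Finset.inter_subset_left.trans Finset.subset_union_right)
    · exact Finset.inter_subset_left.trans Finset.subset_union_right
    · intro a ha x hx
      rcases Finset.mem_union.1 ha with ha | ha
      · exact h.hCL a (Finset.mem_union_left _ ha) x
          (Finset.mem_union_right _ (Finset.mem_of_mem_inter_left hx))
      · intro hadj
        exact hcross x (Finset.mem_of_mem_inter_right hx) a
          (Finset.mem_of_mem_inter_right ha) hadj.symm

lemma PHyp.right {b : Finset V} {l r : BTree V} {C K L : Finset V}
    (h : PHyp G (.node b l r) C K L) (ht : IsSepTree G (.node b l r)) :
    PHyp G r (C ∪ (L ∩ l.verts)) (K ∩ r.verts) (L ∩ r.verts) := by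
  obtain ⟨hbl, hbr, hlr, hcross, htl, htr⟩ := ht
  refine ⟨Finset.inter_subset_right, Finset.inter_subset_right, ?_, ?_, ?_⟩
  · refine Finset.disjoint_union_left.2 ⟨?_, ?_⟩
    · exact h.hC.mono_right right_subset_verts
    · exact hlr.mono_left Finset.inter_subset_right
  · refine isIndep_union (isIndep_subset h.hCL ?_) (isIndep_subset h.hCK ?_) ?_
    · exact Finset.union_subset Finset.subset_union_left
        (Finset.inter_subset_left.trans Finset.subset_union_right)
    · exact Finset.inter_subset_left.trans Finset.subset_union_right
    · intro a ha x hx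
      rcases Finset.mem_union.1 ha with ha | ha
      · exact h.hCK a (Finset.mem_union_left _ ha) x
          (Finset.mem_union_right _ (Finset.mem_of_mem_inter_left hx))
      · intro hadj
        exact hcross a (Finset.mem_of_mem_inter_right ha) x
          (Finset.mem_of_mem_inter_right hx) hadj
  · refine isIndep_subset h.hCL ?_
    exact Finset.union_subset
      (Finset.union_subset Finset.subset_union_left
        (Finset.inter_subset_left.trans Finset.subset_union_right))
      (Finset.inter_subset_left.trans Finset.subset_union_right)

end AuxTree
section AuxPath

variable {V : Type*} [Fintype V] [DecidableEq V] {G : SimpleGraph V}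

lemma mem_verts_node {x : V} {b : Finset V} {l r : BTree V} :
    x ∈ (BTree.node b l r).verts ↔ x ∈ b ∨ x ∈ l.verts ∨ x ∈ r.verts := by
  rw [BTree.verts]; simp [Finset.mem_union, or_assoc]

lemma pathRec_getLast? {t : BTree V} (ht : IsSepTree G t) {C K L : Finset V}
    (h : PHyp G t C K L) : (pathRec t C K L).getLast? = some (C ∪ L) := by
  induction t generalizing C K L with
  | leaf b =>
    rw [pathRec]
    have hCK := Finset.disjoint_left.1 (h.hC.mono_right h.hK)
    have hlink : (remSeq (C ∪ K) K.toList).getLast? = (addSeq C L.toList).head? := by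
      rw [remSeq_getLast?, addSeq_head?, Finset.toList_toFinset]
      congr 1
      ext x
      simp only [Finset.mem_sdiff, Finset.mem_union]
      have := @hCK x
      tauto
    rw [glue_getLast? hlink, addSeq_getLast?, Finset.toList_toFinset]
  | node b l r ihl ihr =>
    obtain ⟨hbl, hbr, hlr, hcross, htl, htr⟩ := id ht
    have hbl' := Finset.disjoint_left.1 hbl
    have hbr' := Finset.disjoint_left.1 hbr
    have hlr' := Finset.disjoint_left.1 hlr
    have hCv' := Finset.disjoint_left.1 h.hC
    have link1 : (remSeq (C ∪ K) (K ∩ b).toList).getLast? =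
        (glue (pathRec l (C ∪ (K ∩ r.verts)) (K ∩ l.verts) (L ∩ l.verts))
          (glue (pathRec r (C ∪ (L ∩ l.verts)) (K ∩ r.verts) (L ∩ r.verts))
            (addSeq (C ∪ (L ∩ l.verts) ∪ (L ∩ r.verts)) (L ∩ b).toList))).head? := by
      rw [remSeq_getLast?, Finset.toList_toFinset, glue_head? pathRec_ne_nil, pathRec_head?]
      congr 1
      ext x
      simp only [Finset.mem_sdiff, Finset.mem_union, Finset.mem_inter]
      have hxK : x ∈ K → x ∈ b ∨ x ∈ l.verts ∨ x ∈ r.verts :=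
        fun hx => mem_verts_node.1 (h.hK hx)
      have hxC2 : x ∈ C → x ∈ b → False :=
        fun hx h2 => hCv' hx (mem_verts_node.2 (Or.inl h2))
      have h1 : x ∈ b → x ∈ l.verts → False := fun ha hb => hbl' ha hb
      have h2 : x ∈ b → x ∈ r.verts → False := fun ha hb => hbr' ha hb
      constructor
      · rintro ⟨hx | hx, hnb⟩
        · exact Or.inl (Or.inl hx)
        · rcases hxK hx with hb | hl | hr
          · exact absurd ⟨hx, hb⟩ hnb
          · exact Or.inr ⟨hx, hl⟩
          · exact Or.inl (Or.inr ⟨hx, hr⟩)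
      · rintro ((hx | ⟨hx, hr⟩) | ⟨hx, hl⟩)
        · exact ⟨Or.inl hx, fun hc => hxC2 hx hc.2⟩
        · exact ⟨Or.inr hx, fun hc => h2 hc.2 hr⟩
        · exact ⟨Or.inr hx, fun hc => h1 hc.2 hl⟩
    have link2 : (pathRec l (C ∪ (K ∩ r.verts)) (K ∩ l.verts) (L ∩ l.verts)).getLast? =
        (glue (pathRec r (C ∪ (L ∩ l.verts)) (K ∩ r.verts) (L ∩ r.verts))
          (addSeq (C ∪ (L ∩ l.verts) ∪ (L ∩ r.verts)) (L ∩ b).toList)).head? := by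
      rw [ihl htl (h.left ht), glue_head? pathRec_ne_nil, pathRec_head?,
        Finset.union_right_comm]
    have link3 : (pathRec r (C ∪ (L ∩ l.verts)) (K ∩ r.verts) (L ∩ r.verts)).getLast? =
        (addSeq (C ∪ (L ∩ l.verts) ∪ (L ∩ r.verts)) (L ∩ b).toList).head? := by
      rw [ihr htr (h.right ht), addSeq_head?]
    rw [pathRec, glue_getLast? link1, glue_getLast? link2, glue_getLast? link3,
      addSeq_getLast?, Finset.toList_toFinset]
    congr 1
    ext x
    simp only [Finset.mem_union, Finset.mem_inter]
    have hxL : x ∈ L → x ∈ b ∨ x ∈ l.verts ∨ x ∈ r.verts :=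
      fun hx => mem_verts_node.1 (h.hL hx)
    tauto

lemma pathRec_link1 {b : Finset V} {l r : BTree V} {C K L : Finset V}
    (ht : IsSepTree G (.node b l r)) (h : PHyp G (.node b l r) C K L)
    (q : List (Finset V)) :
    (remSeq (C ∪ K) (K ∩ b).toList).getLast? =
      (glue (pathRec l (C ∪ (K ∩ r.verts)) (K ∩ l.verts) (L ∩ l.verts)) q).head? := by
  obtain ⟨hbl, hbr, hlr, hcross, htl, htr⟩ := id ht
  rw [remSeq_getLast?, Finset.toList_toFinset, glue_head? pathRec_ne_nil, pathRec_head?]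
  congr 1
  ext x
  simp only [Finset.mem_sdiff, Finset.mem_union, Finset.mem_inter]
  have hxK : x ∈ K → x ∈ b ∨ x ∈ l.verts ∨ x ∈ r.verts :=
    fun hx => mem_verts_node.1 (h.hK hx)
  have hxC2 : x ∈ C → x ∈ b → False :=
    fun hx h2 => Finset.disjoint_left.1 h.hC hx (mem_verts_node.2 (Or.inl h2))
  have h1 : x ∈ b → x ∈ l.verts → False := fun ha hb => Finset.disjoint_left.1 hbl ha hb
  have h2 : x ∈ b → x ∈ r.verts → False := fun ha hb => Finset.disjoint_left.1 hbr ha hb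
  constructor
  · rintro ⟨hx | hx, hnb⟩
    · exact Or.inl (Or.inl hx)
    · rcases hxK hx with hb | hl | hr
      · exact absurd ⟨hx, hb⟩ hnb
      · exact Or.inr ⟨hx, hl⟩
      · exact Or.inl (Or.inr ⟨hx, hr⟩)
  · rintro ((hx | ⟨hx, hr⟩) | ⟨hx, hl⟩)
    · exact ⟨Or.inl hx, fun hc => hxC2 hx hc.2⟩
    · exact ⟨Or.inr hx, fun hc => h2 hc.2 hr⟩
    · exact ⟨Or.inr hx, fun hc => h1 hc.2 hl⟩

lemma pathRec_link2 {b : Finset V} {l r : BTree V} {C K L : Finset V}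
    (ht : IsSepTree G (.node b l r)) (h : PHyp G (.node b l r) C K L)
    (q : List (Finset V)) :
    (pathRec l (C ∪ (K ∩ r.verts)) (K ∩ l.verts) (L ∩ l.verts)).getLast? =
      (glue (pathRec r (C ∪ (L ∩ l.verts)) (K ∩ r.verts) (L ∩ r.verts)) q).head? := by
  obtain ⟨hbl, hbr, hlr, hcross, htl, htr⟩ := id ht
  rw [pathRec_getLast? htl (h.left ht), glue_head? pathRec_ne_nil, pathRec_head?,
    Finset.union_right_comm]

lemma pathRec_link3 {b : Finset V} {l r : BTree V} {C K L : Finset V}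
    (ht : IsSepTree G (.node b l r)) (h : PHyp G (.node b l r) C K L) :
    (pathRec r (C ∪ (L ∩ l.verts)) (K ∩ r.verts) (L ∩ r.verts)).getLast? =
      (addSeq (C ∪ (L ∩ l.verts) ∪ (L ∩ r.verts)) (L ∩ b).toList).head? := by
  obtain ⟨hbl, hbr, hlr, hcross, htl, htr⟩ := id ht
  rw [pathRec_getLast? htr (h.right ht), addSeq_head?]

lemma pathRec_leaf_link {b : Finset V} {C K L : Finset V}
    (h : PHyp G (.leaf b) C K L) :
    (remSeq (C ∪ K) K.toList).getLast? = (addSeq C L.toList).head? := by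
  have hCK := Finset.disjoint_left.1 (h.hC.mono_right h.hK)
  rw [remSeq_getLast?, addSeq_head?, Finset.toList_toFinset]
  congr 1
  ext x
  simp only [Finset.mem_sdiff, Finset.mem_union]
  have := @hCK x
  tauto

lemma card_three_parts {b : Finset V} {l r : BTree V} {K : Finset V}
    (hK : K ⊆ (BTree.node b l r).verts)
    (hbl : Disjoint b l.verts) (hbr : Disjoint b r.verts) (hlr : Disjoint l.verts r.verts) :
    (K ∩ b).card + (K ∩ l.verts).card + (K ∩ r.verts).card = K.card := by
  have hu : (K ∩ b) ∪ ((K ∩ l.verts) ∪ (K ∩ r.verts)) = K := by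
    ext x
    simp only [Finset.mem_union, Finset.mem_inter]
    have hxK : x ∈ K → x ∈ b ∨ x ∈ l.verts ∨ x ∈ r.verts :=
      fun hx => mem_verts_node.1 (hK hx)
    tauto
  have d1 : Disjoint (K ∩ b) ((K ∩ l.verts) ∪ (K ∩ r.verts)) := by
    refine Finset.disjoint_union_right.2 ⟨?_, ?_⟩
    · exact (hbl.mono_left Finset.inter_subset_right).mono_right Finset.inter_subset_right
    · exact (hbr.mono_left Finset.inter_subset_right).mono_right Finset.inter_subset_right
  have d2 : Disjoint (K ∩ l.verts) (K ∩ r.verts) :=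
    (hlr.mono_left Finset.inter_subset_right).mono_right Finset.inter_subset_right
  have e1 := Finset.card_union_of_disjoint d1
  have e2 := Finset.card_union_of_disjoint d2
  rw [hu] at e1
  omega

lemma pathRec_length {t : BTree V} (ht : IsSepTree G t) {C K L : Finset V}
    (h : PHyp G t C K L) : (pathRec t C K L).length = K.card + L.card + 1 := by
  induction t generalizing C K L with
  | leaf b =>
    rw [pathRec]
    unfold glue
    rw [List.length_append, List.length_tail, remSeq_length, addSeq_length,
      Finset.length_toList, Finset.length_toList]
    omega
  | node b l r ihl ihr =>
    obtain ⟨hbl, hbr, hlr, hcross, htl, htr⟩ := id ht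
    have hKc := card_three_parts h.hK hbl hbr hlr
    have hLc := card_three_parts h.hL hbl hbr hlr
    rw [pathRec]
    unfold glue
    rw [List.length_append, List.length_tail, List.length_append, List.length_tail,
      List.length_append, List.length_tail, remSeq_length, addSeq_length,
      Finset.length_toList, Finset.length_toList, ihl htl (h.left ht), ihr htr (h.right ht)]
    omega

lemma pathRec_mem {t : BTree V} (ht : IsSepTree G t) {C K L : Finset V}
    (h : PHyp G t C K L) :
    ∀ S ∈ pathRec t C K L, IsIndep G S ∧ C ⊆ S ∧ S ⊆ C ∪ t.verts := by
  induction t generalizing C K L with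
  | leaf b =>
    intro S hS
    rw [pathRec] at hS
    rcases glue_mem hS with hS | hS
    · obtain ⟨h1, h2⟩ := remSeq_mem S hS
      rw [Finset.toList_toFinset] at h1
      refine ⟨isIndep_subset h.hCK h2, ?_, h2.trans (Finset.union_subset_union_right h.hK)⟩
      intro x hx
      exact h1 (Finset.mem_sdiff.2 ⟨Finset.mem_union_left _ hx,
        fun hK => Finset.disjoint_left.1 h.hC hx (h.hK hK)⟩)
    · obtain ⟨h1, h2⟩ := addSeq_mem S hS
      rw [Finset.toList_toFinset] at h2
      exact ⟨isIndep_subset h.hCL h2, h1, h2.trans (Finset.union_subset_union_right h.hL)⟩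
  | node b l r ihl ihr =>
    obtain ⟨hbl, hbr, hlr, hcross, htl, htr⟩ := id ht
    intro S hS
    rw [pathRec] at hS
    rcases glue_mem hS with hS | hS
    · obtain ⟨h1, h2⟩ := remSeq_mem S hS
      rw [Finset.toList_toFinset] at h1
      refine ⟨isIndep_subset h.hCK h2, ?_, h2.trans (Finset.union_subset_union_right h.hK)⟩
      intro x hx
      refine h1 (Finset.mem_sdiff.2 ⟨Finset.mem_union_left _ hx, fun hKb => ?_⟩)
      exact Finset.disjoint_left.1 h.hC hx (h.hK (Finset.mem_of_mem_inter_left hKb))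
    rcases glue_mem hS with hS | hS
    · obtain ⟨h1, h2, h3⟩ := ihl htl (h.left ht) S hS
      refine ⟨h1, (Finset.subset_union_left).trans h2, h3.trans ?_⟩
      refine Finset.union_subset (Finset.union_subset Finset.subset_union_left ?_) ?_
      · exact (Finset.inter_subset_right.trans right_subset_verts).trans
          Finset.subset_union_right
      · exact left_subset_verts.trans Finset.subset_union_right
    rcases glue_mem hS with hS | hS
    · obtain ⟨h1, h2, h3⟩ := ihr htr (h.right ht) S hS
      refine ⟨h1, (Finset.subset_union_left).trans h2, h3.trans ?_⟩
      refine Finset.union_subset (Finset.union_subset Finset.subset_union_left ?_) ?_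
      · exact (Finset.inter_subset_right.trans left_subset_verts).trans
          Finset.subset_union_right
      · exact right_subset_verts.trans Finset.subset_union_right
    · obtain ⟨h1, h2⟩ := addSeq_mem S hS
      rw [Finset.toList_toFinset] at h2
      have hXL : C ∪ (L ∩ l.verts) ∪ (L ∩ r.verts) ∪ (L ∩ b) ⊆ C ∪ L := by
        refine Finset.union_subset (Finset.union_subset (Finset.union_subset
          Finset.subset_union_left ?_) ?_) ?_ <;>
          exact Finset.inter_subset_left.trans Finset.subset_union_right
      refine ⟨isIndep_subset h.hCL (h2.trans hXL), ?_, (h2.trans hXL).trans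
        (Finset.union_subset_union_right h.hL)⟩
      have hc : C ⊆ C ∪ (L ∩ l.verts) ∪ (L ∩ r.verts) :=
        Finset.subset_union_left.trans Finset.subset_union_left
      exact hc.trans h1

lemma pathRec_chain' {t : BTree V} (ht : IsSepTree G t) {C K L : Finset V}
    (h : PHyp G t C K L) :
    List.Chain' (fun I J => (symmDiff I J).card = 1) (pathRec t C K L) := by
  induction t generalizing C K L with
  | leaf b =>
    rw [pathRec]
    refine glue_chain' ?_ ?_ (pathRec_leaf_link h)
    · exact remSeq_chain' (Finset.nodup_toList K)
        (fun x hx => Finset.mem_union_right _ (Finset.mem_toList.1 hx))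
    · exact addSeq_chain' (Finset.nodup_toList L)
        (fun x hx hC => Finset.disjoint_left.1 h.hC hC (h.hL (Finset.mem_toList.1 hx)))
  | node b l r ihl ihr =>
    obtain ⟨hbl, hbr, hlr, hcross, htl, htr⟩ := id ht
    rw [pathRec]
    refine glue_chain' ?_ (glue_chain' ?_ (glue_chain' ?_ ?_ (pathRec_link3 ht h))
      (pathRec_link2 ht h _)) (pathRec_link1 ht h _)
    · exact remSeq_chain' (Finset.nodup_toList _)
        (fun x hx => Finset.mem_union_right _
          (Finset.mem_of_mem_inter_left (Finset.mem_toList.1 hx)))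
    · exact ihl htl (h.left ht)
    · exact ihr htr (h.right ht)
    · refine addSeq_chain' (Finset.nodup_toList _) ?_
      intro x hx hmem
      have hxb : x ∈ b := Finset.mem_of_mem_inter_right (Finset.mem_toList.1 hx)
      rcases Finset.mem_union.1 hmem with hmem | hmem
      · rcases Finset.mem_union.1 hmem with hmem | hmem
        · exact Finset.disjoint_left.1 h.hC hmem (mem_verts_node.2 (Or.inl hxb))
        · exact Finset.disjoint_left.1 hbl hxb (Finset.mem_of_mem_inter_right hmem)
      · exact Finset.disjoint_left.1 hbr hxb (Finset.mem_of_mem_inter_right hmem)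
end AuxPath
section AuxKey

variable {V : Type*} [Fintype V] [DecidableEq V] {G : SimpleGraph V}

lemma isIndep_empty : IsIndep G (∅ : Finset V) := by
  intro u hu
  simp at hu

lemma usesEdge_remSeq {S : Finset V} {l : List V} {W W' : Finset V}
    (hnd : l.Nodup) (hl : l.toFinset ⊆ S) (hu : usesEdge (remSeq S l) W W') :
    ∃ v ∈ l, v ∈ W ∧ W' = W.erase v ∧ S \ l.toFinset ⊆ W' ∧ W ⊆ S := by
  induction l generalizing S with
  | nil => simp [remSeq, usesEdge] at hu
  | cons a l ih =>
    have hsd : S \ (a :: l).toFinset = S.erase a \ l.toFinset := by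
      ext x
      simp only [Finset.mem_sdiff, Finset.mem_erase, List.toFinset_cons, Finset.mem_insert,
        List.mem_toFinset]
      tauto
    rw [remSeq] at hu
    rcases usesEdge_cons.1 hu with ⟨rfl, h2⟩ | hu
    · rw [remSeq_head?] at h2
      cases h2
      have haS : a ∈ S := hl (by simp)
      refine ⟨a, List.mem_cons_self, haS, rfl, ?_, subset_rfl⟩
      rw [hsd]
      exact Finset.sdiff_subset
    · have hl' : l.toFinset ⊆ S.erase a := by
        intro x hx
        rw [List.mem_toFinset] at hx
        refine Finset.mem_erase.2 ⟨?_, hl (by simp [hx])⟩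
        rintro rfl
        exact (List.nodup_cons.1 hnd).1 hx
      obtain ⟨v, hvl, h1, h2, h3, h4⟩ := ih (List.Nodup.of_cons hnd) hl' hu
      exact ⟨v, List.mem_cons_of_mem a hvl, h1, h2, by rw [hsd]; exact h3,
        h4.trans (Finset.erase_subset _ _)⟩

lemma usesEdge_addSeq {S : Finset V} {l : List V} {W W' : Finset V}
    (hnd : l.Nodup) (hl : ∀ x ∈ l, x ∉ S) (hu : usesEdge (addSeq S l) W W') :
    ∃ v ∈ l, v ∉ W ∧ W' = insert v W ∧ S ⊆ W ∧ W' ⊆ S ∪ l.toFinset := by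
  induction l generalizing S with
  | nil => simp [addSeq, usesEdge] at hu
  | cons a l ih =>
    have hsd : insert a S ∪ l.toFinset = S ∪ (a :: l).toFinset := by
      ext x
      simp only [Finset.mem_union, Finset.mem_insert, List.toFinset_cons, List.mem_toFinset]
      tauto
    rw [addSeq] at hu
    rcases usesEdge_cons.1 hu with ⟨rfl, h2⟩ | hu
    · rw [addSeq_head?] at h2
      cases h2
      refine ⟨a, List.mem_cons_self, hl a List.mem_cons_self, rfl, subset_rfl, ?_⟩
      rw [← hsd]
      exact Finset.subset_union_left
    · have hl' : ∀ x ∈ l, x ∉ insert a S := by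
        intro x hx
        simp only [Finset.mem_insert, not_or]
        exact ⟨fun hc => (List.nodup_cons.1 hnd).1 (hc ▸ hx), hl x (List.mem_cons_of_mem a hx)⟩
      obtain ⟨v, hvl, h1, h2, h3, h4⟩ := ih (List.Nodup.of_cons hnd) hl' hu
      exact ⟨v, List.mem_cons_of_mem a hvl, h1, h2, (Finset.subset_insert a S).trans h3,
        by rw [← hsd]; exact h4⟩

set_option maxHeartbeats 2000000 in
lemma pathRec_usesEdge {t : BTree V} (ht : IsSepTree G t) {C K L W W' : Finset V}
    (h : PHyp G t C K L) (hu : usesEdge (pathRec t C K L) W W') :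
    ∃ v ∈ t.verts, ∃ ph : Bool,
      (ph = true → W' = insert v W ∧ v ∉ W) ∧
      (ph = false → W' = W.erase v ∧ v ∈ W) ∧
      W ∩ t.done v ph = L ∩ t.done v ph ∧
      W ∩ (t.verts \ (t.anc v ∪ t.done v ph)) = K ∩ (t.verts \ (t.anc v ∪ t.done v ph)) ∧
      (W ∪ W') ∩ t.anc v ⊆ (cond ph L K) ∧
      IsIndep G ((K ∩ t.done v ph) ∪ (L ∩ (t.verts \ (t.anc v ∪ t.done v ph)))) := by
  induction t generalizing C K L W W' with
  | leaf b =>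
    rw [pathRec] at hu
    have hCb := Finset.disjoint_left.1 h.hC
    rcases glue_usesEdge (pathRec_leaf_link h) hu with hu1 | hu2
    · obtain ⟨v, hvl, hvW, hW', hlow, hhigh⟩ := usesEdge_remSeq (Finset.nodup_toList K)
        (by rw [Finset.toList_toFinset]; exact Finset.subset_union_right) hu1
      have hvK : v ∈ K := Finset.mem_toList.1 hvl
      refine ⟨v, h.hK hvK, false, by simp, fun _ => ⟨hW', hvW⟩, ?_, ?_, ?_, ?_⟩
      · show W ∩ (∅ : Finset V) = L ∩ ∅
        simp
      · show W ∩ (b \ (b ∪ ∅)) = K ∩ (b \ (b ∪ ∅))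
        simp
      · show (W ∪ W') ∩ b ⊆ K
        intro x hx
        obtain ⟨hx1, hx2⟩ := Finset.mem_inter.1 hx
        have hxW : x ∈ W := by
          rcases Finset.mem_union.1 hx1 with hxx | hxx
          · exact hxx
          · exact Finset.mem_of_mem_erase (hW' ▸ hxx)
        rcases Finset.mem_union.1 (hhigh hxW) with hxx | hxx
        · exact absurd hx2 (hCb hxx)
        · exact hxx
      · show IsIndep G (K ∩ (∅ : Finset V) ∪ L ∩ (b \ (b ∪ ∅)))
        simpa using (isIndep_empty (G := G))
    · obtain ⟨v, hvl, hvW, hW', hlow, hhigh⟩ := usesEdge_addSeq (Finset.nodup_toList L)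
        (fun x hx hC => hCb hC (h.hL (Finset.mem_toList.1 hx))) hu2
      have hvL : v ∈ L := Finset.mem_toList.1 hvl
      rw [Finset.toList_toFinset] at hhigh
      refine ⟨v, h.hL hvL, true, fun _ => ⟨hW', hvW⟩, by simp, ?_, ?_, ?_, ?_⟩
      · show W ∩ (∅ : Finset V) = L ∩ ∅
        simp
      · show W ∩ (b \ (b ∪ ∅)) = K ∩ (b \ (b ∪ ∅))
        simp
      · show (W ∪ W') ∩ b ⊆ L
        intro x hx
        obtain ⟨hx1, hx2⟩ := Finset.mem_inter.1 hx
        have hxW' : x ∈ W' := by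
          rcases Finset.mem_union.1 hx1 with hxx | hxx
          · rw [hW']; exact Finset.mem_insert_of_mem hxx
          · exact hxx
        rcases Finset.mem_union.1 (hhigh hxW') with hxx | hxx
        · exact absurd hx2 (hCb hxx)
        · exact hxx
      · show IsIndep G (K ∩ (∅ : Finset V) ∪ L ∩ (b \ (b ∪ ∅)))
        simpa using (isIndep_empty (G := G))
  | node b l r ihl ihr =>
    obtain ⟨hbl, hbr, hlr, hcross, htl, htr⟩ := id ht
    have hbl' := Finset.disjoint_left.1 hbl
    have hbr' := Finset.disjoint_left.1 hbr
    have hlr' := Finset.disjoint_left.1 hlr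
    have hCv := Finset.disjoint_left.1 h.hC
    rw [pathRec] at hu
    rcases glue_usesEdge (pathRec_link1 ht h _) hu with hu1 | hu
    · -- removal of the bag `K ∩ b`
      obtain ⟨v, hvl, hvW, hW', hlow, hhigh⟩ := usesEdge_remSeq (Finset.nodup_toList _)
        (by rw [Finset.toList_toFinset]
            exact Finset.inter_subset_left.trans Finset.subset_union_right) hu1
      rw [Finset.toList_toFinset] at hlow
      have hvKb : v ∈ K ∩ b := Finset.mem_toList.1 hvl
      have hvb : v ∈ b := Finset.mem_of_mem_inter_right hvKb
      have hanc : (BTree.node b l r).anc v = b := by rw [BTree.anc, if_pos hvb]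
      have hdone : (BTree.node b l r).done v false = ∅ := by
        rw [BTree.done, if_pos hvb]
        simp
      have hW'W : W' ⊆ W := by rw [hW']; exact Finset.erase_subset _ _
      refine ⟨v, mem_verts_node.2 (Or.inl hvb), false, by simp, fun _ => ⟨hW', hvW⟩,
        ?_, ?_, ?_, ?_⟩
      · rw [hdone]; simp
      · rw [hanc, hdone, Finset.union_empty]
        apply Finset.Subset.antisymm
        · intro x hx
          obtain ⟨hx1, hx2⟩ := Finset.mem_inter.1 hx
          obtain ⟨hx3, hx4⟩ := Finset.mem_sdiff.1 hx2
          rcases Finset.mem_union.1 (hhigh hx1) with hxx | hxx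
          · exact absurd hx3 (hCv hxx)
          · exact Finset.mem_inter.2 ⟨hxx, hx2⟩
        · intro x hx
          obtain ⟨hx1, hx2⟩ := Finset.mem_inter.1 hx
          obtain ⟨hx3, hx4⟩ := Finset.mem_sdiff.1 hx2
          refine Finset.mem_inter.2 ⟨hW'W (hlow ?_), hx2⟩
          refine Finset.mem_sdiff.2 ⟨Finset.mem_union_right _ hx1, fun hc => ?_⟩
          exact hx4 (Finset.mem_of_mem_inter_right hc)
      · rw [hanc]
        intro x hx
        obtain ⟨hx1, hx2⟩ := Finset.mem_inter.1 hx
        have hxW : x ∈ W := by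
          rcases Finset.mem_union.1 hx1 with hxx | hxx
          · exact hxx
          · exact hW'W hxx
        rcases Finset.mem_union.1 (hhigh hxW) with hxx | hxx
        · exact absurd (mem_verts_node.2 (Or.inl hx2)) (hCv hxx)
        · exact hxx
      · rw [hdone, hanc, Finset.union_empty, Finset.inter_empty, Finset.empty_union]
        exact isIndep_subset h.hCL
          (Finset.inter_subset_left.trans Finset.subset_union_right)
    rcases glue_usesEdge (pathRec_link2 ht h _) hu with hu2 | hu
    · -- edge inside the left subtree
      obtain ⟨v, hvl, ph, hph1, hph0, hdone, hUeq, hancsub, hind⟩ := ihl htl (h.left ht) hu2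
      have hvb : v ∉ b := fun hc => hbl' hc hvl
      have hanc_eq : (BTree.node b l r).anc v = b ∪ l.anc v := by
        rw [BTree.anc, if_neg hvb, if_pos hvl]
      have hdone_eq : (BTree.node b l r).done v ph = l.done v ph := by
        rw [BTree.done, if_neg hvb, if_pos hvl]
      obtain ⟨hWmem, hW'mem⟩ := usesEdge_mem hu2
      obtain ⟨hWind, hWlo, hWhi⟩ := pathRec_mem htl (h.left ht) W hWmem
      obtain ⟨hW'ind, hW'lo, hW'hi⟩ := pathRec_mem htl (h.left ht) W' hW'mem
      have hal := anc_subset_verts l v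
      have hdl := done_subset_verts l v ph
      have hUl := @Finset.sdiff_subset _ _ l.verts (l.anc v ∪ l.done v ph)
      have hU_eq : (BTree.node b l r).verts \
          ((BTree.node b l r).anc v ∪ (BTree.node b l r).done v ph) =
          (l.verts \ (l.anc v ∪ l.done v ph)) ∪ r.verts := by
        rw [hanc_eq, hdone_eq]
        ext x
        simp only [Finset.mem_sdiff, Finset.mem_union, mem_verts_node]
        constructor
        · rintro ⟨hx | hx | hx, hn⟩
          · exact absurd (Or.inl (Or.inl hx)) hn
          · refine Or.inl ⟨hx, fun hc => ?_⟩
            rcases hc with hc | hc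
            · exact hn (Or.inl (Or.inr hc))
            · exact hn (Or.inr hc)
          · exact Or.inr hx
        · rintro (⟨hx, hn⟩ | hx)
          · exact ⟨Or.inr (Or.inl hx), fun hc => by
              rcases hc with (hc | hc) | hc
              · exact hbl' hc hx
              · exact hn (Or.inl hc)
              · exact hn (Or.inr hc)⟩
          · refine ⟨Or.inr (Or.inr hx), fun hc => ?_⟩
            rcases hc with (hc | hc) | hc
            · exact hbr' hc hx
            · exact hlr' (hal hc) hx
            · exact hlr' (hdl hc) hx
      have hWr : W ∩ r.verts = K ∩ r.verts := by
        apply Finset.Subset.antisymm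
        · intro x hx
          obtain ⟨hx1, hx2⟩ := Finset.mem_inter.1 hx
          rcases Finset.mem_union.1 (hWhi hx1) with hxx | hxx
          · rcases Finset.mem_union.1 hxx with hxx | hxx
            · exact absurd (mem_verts_node.2 (Or.inr (Or.inr hx2))) (hCv hxx)
            · exact Finset.mem_inter.2 ⟨Finset.mem_of_mem_inter_left hxx, hx2⟩
          · exact absurd hx2 (hlr' hxx)
        · intro x hx
          exact Finset.mem_inter.2
            ⟨hWlo (Finset.mem_union_right _ hx), Finset.mem_of_mem_inter_right hx⟩
      refine ⟨v, mem_verts_node.2 (Or.inr (Or.inl hvl)), ph, hph1, hph0, ?_, ?_, ?_, ?_⟩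
      · rw [hdone_eq, hdone]
        ext x
        simp only [Finset.mem_inter]
        have := @hdl x
        tauto
      · rw [hU_eq, Finset.inter_union_distrib_left, Finset.inter_union_distrib_left,
          hWr, hUeq]
        congr 1
        ext x
        simp only [Finset.mem_inter, Finset.mem_sdiff]
        have := @hUl x
        tauto
      · rw [hanc_eq]
        have hsub : (cond ph (L ∩ l.verts) (K ∩ l.verts) : Finset V) ⊆ cond ph L K := by
          cases ph <;> exact Finset.inter_subset_left
        intro x hx
        obtain ⟨hx1, hx2⟩ := Finset.mem_inter.1 hx
        rcases Finset.mem_union.1 hx2 with hxb | hxa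
        · exfalso
          have hxlv : x ∈ (C ∪ K ∩ r.verts) ∪ l.verts := by
            rcases Finset.mem_union.1 hx1 with hxx | hxx
            · exact hWhi hxx
            · exact hW'hi hxx
          rcases Finset.mem_union.1 hxlv with hxx | hxx
          · rcases Finset.mem_union.1 hxx with hxx | hxx
            · exact hCv hxx (mem_verts_node.2 (Or.inl hxb))
            · exact hbr' hxb (Finset.mem_of_mem_inter_right hxx)
          · exact hbl' hxb hxx
        · exact hsub (hancsub (Finset.mem_inter.2 ⟨hx1, hxa⟩))
      · rw [hU_eq, hdone_eq]
        have e1 : K ∩ l.done v ph = (K ∩ l.verts) ∩ l.done v ph := by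
          ext x
          simp only [Finset.mem_inter]
          have := @hdl x
          tauto
        have e2 : L ∩ ((l.verts \ (l.anc v ∪ l.done v ph)) ∪ r.verts) =
            ((L ∩ l.verts) ∩ (l.verts \ (l.anc v ∪ l.done v ph))) ∪ (L ∩ r.verts) := by
          ext x
          simp only [Finset.mem_inter, Finset.mem_union, Finset.mem_sdiff]
          have := @hUl x
          tauto
        rw [e1, e2, ← Finset.union_assoc]
        refine isIndep_union hind
          (isIndep_subset h.hCL (Finset.inter_subset_left.trans Finset.subset_union_right)) ?_
        intro a ha x hx
        have hale : a ∈ l.verts := by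
          rcases Finset.mem_union.1 ha with ha | ha
          · exact Finset.mem_of_mem_inter_right (Finset.mem_of_mem_inter_left ha)
          · exact hUl (Finset.mem_of_mem_inter_right ha)
        exact hcross a hale x (Finset.mem_of_mem_inter_right hx)
    rcases glue_usesEdge (pathRec_link3 ht h) hu with hu3 | hu4
    · -- edge inside the right subtree
      obtain ⟨v, hvl, ph, hph1, hph0, hdone, hUeq, hancsub, hind⟩ := ihr htr (h.right ht) hu3
      have hvb : v ∉ b := fun hc => hbr' hc hvl
      have hvlv : v ∉ l.verts := fun hc => hlr' hc hvl
      have hanc_eq : (BTree.node b l r).anc v = b ∪ r.anc v := by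
        rw [BTree.anc, if_neg hvb, if_neg hvlv]
      have hdone_eq : (BTree.node b l r).done v ph = l.verts ∪ r.done v ph := by
        rw [BTree.done, if_neg hvb, if_neg hvlv]
      obtain ⟨hWmem, hW'mem⟩ := usesEdge_mem hu3
      obtain ⟨hWind, hWlo, hWhi⟩ := pathRec_mem htr (h.right ht) W hWmem
      obtain ⟨hW'ind, hW'lo, hW'hi⟩ := pathRec_mem htr (h.right ht) W' hW'mem
      have har := anc_subset_verts r v
      have hdr := done_subset_verts r v ph
      have hUr := @Finset.sdiff_subset _ _ r.verts (r.anc v ∪ r.done v ph)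
      have hU_eq : (BTree.node b l r).verts \
          ((BTree.node b l r).anc v ∪ (BTree.node b l r).done v ph) =
          r.verts \ (r.anc v ∪ r.done v ph) := by
        rw [hanc_eq, hdone_eq]
        ext x
        simp only [Finset.mem_sdiff, Finset.mem_union, mem_verts_node]
        constructor
        · rintro ⟨hx | hx | hx, hn⟩
          · exact absurd (Or.inl (Or.inl hx)) hn
          · exact absurd (Or.inr (Or.inl hx)) hn
          · refine ⟨hx, fun hc => ?_⟩
            rcases hc with hc | hc
            · exact hn (Or.inl (Or.inr hc))
            · exact hn (Or.inr (Or.inr hc))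
        · rintro ⟨hx, hn⟩
          refine ⟨Or.inr (Or.inr hx), fun hc => ?_⟩
          rcases hc with (hc | hc) | hc | hc
          · exact hbr' hc hx
          · exact hn (Or.inl hc)
          · exact hlr' hc hx
          · exact hn (Or.inr hc)
      have hWl : W ∩ l.verts = L ∩ l.verts := by
        apply Finset.Subset.antisymm
        · intro x hx
          obtain ⟨hx1, hx2⟩ := Finset.mem_inter.1 hx
          rcases Finset.mem_union.1 (hWhi hx1) with hxx | hxx
          · rcases Finset.mem_union.1 hxx with hxx | hxx
            · exact absurd (mem_verts_node.2 (Or.inr (Or.inl hx2))) (hCv hxx)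
            · exact Finset.mem_inter.2 ⟨Finset.mem_of_mem_inter_left hxx, hx2⟩
          · exact absurd hxx (hlr' hx2)
        · intro x hx
          exact Finset.mem_inter.2
            ⟨hWlo (Finset.mem_union_right _ hx), Finset.mem_of_mem_inter_right hx⟩
      refine ⟨v, mem_verts_node.2 (Or.inr (Or.inr hvl)), ph, hph1, hph0, ?_, ?_, ?_, ?_⟩
      · rw [hdone_eq, Finset.inter_union_distrib_left, Finset.inter_union_distrib_left,
          hWl, hdone]
        congr 1
        ext x
        simp only [Finset.mem_inter]
        have := @hdr x
        tauto
      · rw [hU_eq, hUeq]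
        ext x
        simp only [Finset.mem_inter, Finset.mem_sdiff]
        have := @hUr x
        tauto
      · rw [hanc_eq]
        have hsub : (cond ph (L ∩ r.verts) (K ∩ r.verts) : Finset V) ⊆ cond ph L K := by
          cases ph <;> exact Finset.inter_subset_left
        intro x hx
        obtain ⟨hx1, hx2⟩ := Finset.mem_inter.1 hx
        rcases Finset.mem_union.1 hx2 with hxb | hxa
        · exfalso
          have hxlv : x ∈ (C ∪ L ∩ l.verts) ∪ r.verts := by
            rcases Finset.mem_union.1 hx1 with hxx | hxx
            · exact hWhi hxx
            · exact hW'hi hxx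
          rcases Finset.mem_union.1 hxlv with hxx | hxx
          · rcases Finset.mem_union.1 hxx with hxx | hxx
            · exact hCv hxx (mem_verts_node.2 (Or.inl hxb))
            · exact hbl' hxb (Finset.mem_of_mem_inter_right hxx)
          · exact hbr' hxb hxx
        · exact hsub (hancsub (Finset.mem_inter.2 ⟨hx1, hxa⟩))
      · rw [hU_eq, hdone_eq]
        have e1 : K ∩ (l.verts ∪ r.done v ph) = (K ∩ l.verts) ∪ ((K ∩ r.verts) ∩ r.done v ph) := by
          ext x
          simp only [Finset.mem_inter, Finset.mem_union]
          have := @hdr x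
          tauto
        have e2 : L ∩ (r.verts \ (r.anc v ∪ r.done v ph)) =
            (L ∩ r.verts) ∩ (r.verts \ (r.anc v ∪ r.done v ph)) := by
          ext x
          simp only [Finset.mem_inter, Finset.mem_sdiff]
          have := @hUr x
          tauto
        rw [e1, e2, Finset.union_assoc]
        refine isIndep_union
          (isIndep_subset h.hCK (Finset.inter_subset_left.trans Finset.subset_union_right))
          hind ?_
        intro a ha x hx
        have hxr : x ∈ r.verts := by
          rcases Finset.mem_union.1 hx with hx | hx
          · exact Finset.mem_of_mem_inter_right (Finset.mem_of_mem_inter_left hx)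
          · exact hUr (Finset.mem_of_mem_inter_right hx)
        exact hcross a (Finset.mem_of_mem_inter_right ha) x hxr
    · -- insertion of the bag `L ∩ b`
      obtain ⟨v, hvl, hvW, hW', hlow, hhigh⟩ := usesEdge_addSeq (Finset.nodup_toList _)
        (by
          intro x hx hmem
          have hxb : x ∈ b := Finset.mem_of_mem_inter_right (Finset.mem_toList.1 hx)
          rcases Finset.mem_union.1 hmem with hmem | hmem
          · rcases Finset.mem_union.1 hmem with hmem | hmem
            · exact hCv hmem (mem_verts_node.2 (Or.inl hxb))
            · exact hbl' hxb (Finset.mem_of_mem_inter_right hmem)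
          · exact hbr' hxb (Finset.mem_of_mem_inter_right hmem)) hu4
      rw [Finset.toList_toFinset] at hhigh
      have hvLb : v ∈ L ∩ b := Finset.mem_toList.1 hvl
      have hvb : v ∈ b := Finset.mem_of_mem_inter_right hvLb
      have hanc : (BTree.node b l r).anc v = b := by rw [BTree.anc, if_pos hvb]
      have hdone : (BTree.node b l r).done v true = l.verts ∪ r.verts := by
        rw [BTree.done, if_pos hvb]
        simp
      have hWW' : W ⊆ W' := by rw [hW']; exact Finset.subset_insert _ _
      have hU_empty : (BTree.node b l r).verts \
          ((BTree.node b l r).anc v ∪ (BTree.node b l r).done v true) = ∅ := by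
        rw [hanc, hdone]
        ext x
        simp only [Finset.mem_sdiff, Finset.mem_union, mem_verts_node, Finset.notMem_empty,
          iff_false, not_and, not_not]
        tauto
      refine ⟨v, mem_verts_node.2 (Or.inl hvb), true, fun _ => ⟨hW', hvW⟩, by simp,
        ?_, ?_, ?_, ?_⟩
      · rw [hdone]
        apply Finset.Subset.antisymm
        · intro x hx
          obtain ⟨hx1, hx2⟩ := Finset.mem_inter.1 hx
          rcases Finset.mem_union.1 (hhigh (hWW' hx1)) with hxx | hxx
          · rcases Finset.mem_union.1 hxx with hxx | hxx
            · rcases Finset.mem_union.1 hxx with hxx | hxx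
              · refine absurd (mem_verts_node.2 ?_) (hCv hxx)
                rcases Finset.mem_union.1 hx2 with h2 | h2
                · exact Or.inr (Or.inl h2)
                · exact Or.inr (Or.inr h2)
              · exact Finset.mem_inter.2 ⟨Finset.mem_of_mem_inter_left hxx, hx2⟩
            · exact Finset.mem_inter.2 ⟨Finset.mem_of_mem_inter_left hxx, hx2⟩
          · exfalso
            have hxb : x ∈ b := Finset.mem_of_mem_inter_right hxx
            rcases Finset.mem_union.1 hx2 with hxv | hxv
            · exact hbl' hxb hxv
            · exact hbr' hxb hxv
        · intro x hx
          obtain ⟨hx1, hx2⟩ := Finset.mem_inter.1 hx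
          refine Finset.mem_inter.2 ⟨hlow ?_, hx2⟩
          rcases Finset.mem_union.1 hx2 with hxv | hxv
          · exact Finset.mem_union_left _ (Finset.mem_union_right _ (Finset.mem_inter.2 ⟨hx1, hxv⟩))
          · exact Finset.mem_union_right _ (Finset.mem_inter.2 ⟨hx1, hxv⟩)
      · rw [hU_empty]
        simp
      · rw [hanc]
        intro x hx
        obtain ⟨hx1, hx2⟩ := Finset.mem_inter.1 hx
        have hxW' : x ∈ W' := by
          rcases Finset.mem_union.1 hx1 with hxx | hxx
          · exact hWW' hxx
          · exact hxx
        rcases Finset.mem_union.1 (hhigh hxW') with hxx | hxx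
        · rcases Finset.mem_union.1 hxx with hxx | hxx
          · rcases Finset.mem_union.1 hxx with hxx | hxx
            · exact absurd (mem_verts_node.2 (Or.inl hx2)) (hCv hxx)
            · exact absurd hx2 (by
                have := hlr'
                exact fun h2 => hbl' h2 (Finset.mem_of_mem_inter_right hxx))
          · exact absurd hx2 (fun h2 => hbr' h2 (Finset.mem_of_mem_inter_right hxx))
        · exact Finset.mem_of_mem_inter_left hxx
      · rw [hU_empty, hdone]
        refine isIndep_subset h.hCK (Finset.union_subset ?_ ?_)
        · exact Finset.inter_subset_left.trans Finset.subset_union_right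
        · simp

end AuxKey
section AuxGlauber

variable {V : Type*} [Fintype V] [DecidableEq V] {G : SimpleGraph V} {lam : ℝ}

open Classical in
lemma glauberP_cases (hlam : 0 < lam) {W W' : Finset V} (hP : 0 < glauberP G lam W W')
    (hne : W ≠ W') :
    ∃ v, (v ∈ W ∧ W' = W.erase v) ∨ (v ∉ W ∧ IsIndep G (insert v W) ∧ W' = insert v W) := by
  by_contra hcon
  push_neg at hcon
  have hsum : ∑ v : V,
      (if v ∈ W then
        (if W' = W.erase v then 1 / (lam + 1) else if W' = W then lam / (lam + 1) else 0)
      else if IsIndep G (insert v W) then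
        (if W' = insert v W then lam / (lam + 1) else if W' = W then 1 / (lam + 1) else 0)
      else (if W' = W then 1 else 0)) = 0 := by
    refine Finset.sum_eq_zero fun v _ => ?_
    obtain ⟨h1, h2⟩ := hcon v
    by_cases hv : v ∈ W
    · rw [if_pos hv, if_neg (h1 hv), if_neg (Ne.symm hne)]
    · rw [if_neg hv]
      by_cases hind : IsIndep G (insert v W)
      · rw [if_pos hind, if_neg (h2 hv hind), if_neg (Ne.symm hne)]
      · rw [if_neg hind, if_neg (Ne.symm hne)]
  unfold glauberP at hP
  rw [hsum, mul_zero] at hP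
  exact lt_irrefl 0 hP

open Classical in
lemma glauber_summand_nonneg (hlam : 0 < lam) (W W' : Finset V) (v : V) :
    0 ≤ (if v ∈ W then
        (if W' = W.erase v then 1 / (lam + 1) else if W' = W then lam / (lam + 1) else 0)
      else if IsIndep G (insert v W) then
        (if W' = insert v W then lam / (lam + 1) else if W' = W then 1 / (lam + 1) else 0)
      else (if W' = W then 1 else 0)) := by
  have hl1 : (0:ℝ) < lam + 1 := by linarith
  have h1 : (0:ℝ) ≤ 1 / (lam + 1) := le_of_lt (div_pos one_pos hl1)
  have h2 : (0:ℝ) ≤ lam / (lam + 1) := le_of_lt (div_pos hlam hl1)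
  split_ifs <;> first | exact h1 | exact h2 | norm_num

lemma glauberP_ge_erase (hlam : 0 < lam) {W W' : Finset V} {v : V}
    (hv : v ∈ W) (hW' : W' = W.erase v) :
    (1 / (Fintype.card V : ℝ)) * (1 / (lam + 1)) ≤ glauberP G lam W W' := by
  unfold glauberP
  refine mul_le_mul_of_nonneg_left ?_ (by positivity)
  refine le_trans ?_ (Finset.single_le_sum
    (fun u _ => glauber_summand_nonneg hlam W W' u) (Finset.mem_univ v))
  rw [if_pos hv, if_pos hW']

open Classical in
lemma glauberP_ge_insert (hlam : 0 < lam) {W W' : Finset V} {v : V}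
    (hv : v ∉ W) (hind : IsIndep G (insert v W)) (hW' : W' = insert v W) :
    (1 / (Fintype.card V : ℝ)) * (lam / (lam + 1)) ≤ glauberP G lam W W' := by
  unfold glauberP
  refine mul_le_mul_of_nonneg_left ?_ (by positivity)
  refine le_trans ?_ (Finset.single_le_sum
    (fun u _ => glauber_summand_nonneg hlam W W' u) (Finset.mem_univ v))
  rw [if_neg hv, if_pos hind, if_pos hW']

lemma dir_unique {W W' : Finset V} {v v₁ : V} {ph0 ph₁ : Bool}
    (a1 : ph0 = true → W' = insert v W ∧ v ∉ W) (a0 : ph0 = false → W' = W.erase v ∧ v ∈ W)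
    (b1 : ph₁ = true → W' = insert v₁ W ∧ v₁ ∉ W)
    (b0 : ph₁ = false → W' = W.erase v₁ ∧ v₁ ∈ W) :
    v₁ = v ∧ ph₁ = ph0 := by
  cases ph0 <;> cases ph₁
  · obtain ⟨e1, m1⟩ := a0 rfl
    obtain ⟨e2, m2⟩ := b0 rfl
    refine ⟨?_, rfl⟩
    have hnm : v₁ ∉ W' := e2 ▸ Finset.notMem_erase v₁ W
    rw [e1] at hnm
    by_contra hne
    exact hnm (Finset.mem_erase.2 ⟨hne, m2⟩)
  · obtain ⟨e1, m1⟩ := a0 rfl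
    obtain ⟨e2, m2⟩ := b1 rfl
    exfalso
    have : v₁ ∈ W' := e2 ▸ Finset.mem_insert_self v₁ W
    rw [e1] at this
    exact m2 (Finset.mem_of_mem_erase this)
  · obtain ⟨e1, m1⟩ := a1 rfl
    obtain ⟨e2, m2⟩ := b0 rfl
    exfalso
    have : v ∈ W' := e1 ▸ Finset.mem_insert_self v W
    rw [e2] at this
    exact m1 (Finset.mem_of_mem_erase this)
  · obtain ⟨e1, m1⟩ := a1 rfl
    obtain ⟨e2, m2⟩ := b1 rfl
    refine ⟨?_, rfl⟩
    have : v₁ ∈ W' := e2 ▸ Finset.mem_insert_self v₁ W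
    rw [e1] at this
    rcases Finset.mem_insert.1 this with h | h
    · exact h
    · exact absurd h m2

lemma card_partition3 {A D S : Finset V} (hAD : Disjoint A D) :
    S.card = (S ∩ A).card + (S ∩ D).card + (S ∩ (Finset.univ \ (A ∪ D))).card := by
  have hu : (S ∩ A) ∪ ((S ∩ D) ∪ (S ∩ (Finset.univ \ (A ∪ D)))) = S := by
    ext x
    simp only [Finset.mem_union, Finset.mem_inter, Finset.mem_sdiff, Finset.mem_univ,
      true_and]
    tauto
  have hAD' := Finset.disjoint_left.1 hAD
  have d2 : Disjoint (S ∩ D) (S ∩ (Finset.univ \ (A ∪ D))) := by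
    refine Finset.disjoint_left.2 fun x hx hx2 => ?_
    have := (Finset.mem_sdiff.1 (Finset.mem_of_mem_inter_right hx2)).2
    exact this (Finset.mem_union_right _ (Finset.mem_of_mem_inter_right hx))
  have d1 : Disjoint (S ∩ A) ((S ∩ D) ∪ (S ∩ (Finset.univ \ (A ∪ D)))) := by
    refine Finset.disjoint_left.2 fun x hx hx2 => ?_
    have hxA := Finset.mem_of_mem_inter_right hx
    rcases Finset.mem_union.1 hx2 with h | h
    · exact hAD' hxA (Finset.mem_of_mem_inter_right h)
    · exact (Finset.mem_sdiff.1 (Finset.mem_of_mem_inter_right h)).2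
        (Finset.mem_union_left _ hxA)
  have e1 := Finset.card_union_of_disjoint d1
  have e2 := Finset.card_union_of_disjoint d2
  rw [hu] at e1
  omega

lemma pair_weight_bound (hlam : 0 < lam) {A D U eta K L Wmax : Finset V}
    (hU : U = Finset.univ \ (A ∪ D)) (hAD : Disjoint A D)
    (heta : eta = (K ∩ D) ∪ (L ∩ U))
    (hWD : Wmax ∩ D = L ∩ D) (hWU : Wmax ∩ U = K ∩ U)
    (hWA : Wmax ∩ A ⊆ K ∩ A ∨ Wmax ∩ A ⊆ L ∩ A)
    {alf : ℕ} (hKA : (K ∩ A).card ≤ alf) (hLA : (L ∩ A).card ≤ alf) :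
    lam ^ (K.card + L.card) ≤ lamTilde lam ^ (2 * alf) * lam ^ (Wmax.card + eta.card) := by
  have hcard : ∀ S : Finset V, S.card = (S ∩ A).card + (S ∩ D).card + (S ∩ U).card := by
    intro S
    rw [hU]
    exact card_partition3 hAD
  have hDU : Disjoint (K ∩ D) (L ∩ U) := by
    refine Finset.disjoint_left.2 fun x hx hx2 => ?_
    have h1 := Finset.mem_of_mem_inter_right hx
    have h2 := Finset.mem_of_mem_inter_right hx2
    rw [hU] at h2
    exact (Finset.mem_sdiff.1 h2).2 (Finset.mem_union_right _ h1)
  have hetac : eta.card = (K ∩ D).card + (L ∩ U).card := by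
    rw [heta]
    exact Finset.card_union_of_disjoint hDU
  have hWc : Wmax.card = (Wmax ∩ A).card + (L ∩ D).card + (K ∩ U).card := by
    rw [hcard Wmax, hWD, hWU]
  have hle : (Wmax ∩ A).card ≤ (K ∩ A).card + (L ∩ A).card := by
    rcases hWA with h | h
    · exact le_trans (Finset.card_le_card h) (Nat.le_add_right _ _)
    · exact le_trans (Finset.card_le_card h) (Nat.le_add_left _ _)
  have heq : K.card + L.card =
      (Wmax.card + eta.card) + ((K ∩ A).card + (L ∩ A).card - (Wmax ∩ A).card) := by
    have hK := hcard K
    have hL := hcard L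
    omega
  rw [heq, pow_add]
  have hd : (K ∩ A).card + (L ∩ A).card - (Wmax ∩ A).card ≤ 2 * alf := by omega
  have h1 : lam ^ ((K ∩ A).card + (L ∩ A).card - (Wmax ∩ A).card) ≤
      lamTilde lam ^ (2 * alf) := by
    calc lam ^ ((K ∩ A).card + (L ∩ A).card - (Wmax ∩ A).card)
        ≤ lamTilde lam ^ ((K ∩ A).card + (L ∩ A).card - (Wmax ∩ A).card) :=
          pow_le_pow_left₀ hlam.le (le_max_left _ _) _
      _ ≤ lamTilde lam ^ (2 * alf) := pow_le_pow_right₀ (one_le_lamTilde hlam) hd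
  calc lam ^ (Wmax.card + eta.card) * lam ^ ((K ∩ A).card + (L ∩ A).card - (Wmax ∩ A).card)
      ≤ lam ^ (Wmax.card + eta.card) * lamTilde lam ^ (2 * alf) :=
        mul_le_mul_of_nonneg_left h1 (pow_nonneg hlam.le _)
    _ = lamTilde lam ^ (2 * alf) * lam ^ (Wmax.card + eta.card) := mul_comm _ _

lemma recover_first {A D U K L W : Finset V} (hU : U = Finset.univ \ (A ∪ D))
    (hWU : W ∩ U = K ∩ U) :
    (K ∩ A) ∪ (((K ∩ D) ∪ (L ∩ U)) ∩ D) ∪ (W ∩ U) = K := by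
  subst hU
  ext x
  have h1 := Finset.ext_iff.1 hWU x
  simp only [Finset.mem_inter, Finset.mem_union, Finset.mem_sdiff, Finset.mem_univ,
    true_and] at h1 ⊢
  by_cases hA : x ∈ A <;> by_cases hD : x ∈ D <;> tauto

lemma recover_second {A D U K L W : Finset V} (hU : U = Finset.univ \ (A ∪ D))
    (hWD : W ∩ D = L ∩ D) :
    (L ∩ A) ∪ (W ∩ D) ∪ (((K ∩ D) ∪ (L ∩ U)) ∩ U) = L := by
  subst hU
  ext x
  have h1 := Finset.ext_iff.1 hWD x
  simp only [Finset.mem_inter, Finset.mem_union, Finset.mem_sdiff, Finset.mem_univ,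
    true_and] at h1 ⊢
  by_cases hA : x ∈ A <;> by_cases hD : x ∈ D <;> tauto

end AuxGlauber
set_option maxHeartbeats 2000000 in
/-- Let `G` be a graph on `n` vertices, `λ > 0`, and let `t` be a separator
tree of `G` (its bags partition `V(G)`). With `A_v` the union of the bags of the ancestors of
the node containing `v`, there is a family `Γ` of canonical paths between the independent sets
of `G` whose congestion for the Glauber dynamics with fugacity `λ` satisfies
`ρ(Γ) ≤ 4 n² λ̃^{2α+1} max_v |𝓘(G[A_v])|²`, where `λ̃ = max (λ, 1/λ)` and
`α = max_v α(G[A_v])`. -/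
theorem statement_15 (V : Type) [Fintype V] [DecidableEq V] (G : SimpleGraph V)
    (lam : ℝ) (hlam : 0 < lam) (t : BTree V)
    (ht : IsSepTree G t) (htv : t.verts = Finset.univ) :
    ∃ γ : Finset V → Finset V → List (Finset V),
      (∀ K L, K ∈ indepSets G → L ∈ indepSets G → IsReconfPath G K L (γ K L)) ∧
      ∀ W W' : Finset V, W ∈ indepSets G → 0 < glauberP G lam W W' → W ≠ W' →
        congestionAt G lam γ W W' ≤
          4 * (Fintype.card V : ℝ) ^ 2 *
            lamTilde lam ^ (2 * Finset.univ.sup (fun v => alphaOn G (t.anc v)) + 1) *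
            ((Finset.univ.sup (fun v => numIndepOn G (t.anc v)) : ℕ) : ℝ) ^ 2 := by
  classical
  have hPH : ∀ K L : Finset V, K ∈ indepSets G → L ∈ indepSets G → PHyp G t ∅ K L := by
    intro K L hK hL
    refine ⟨htv ▸ Finset.subset_univ K, htv ▸ Finset.subset_univ L,
      Finset.disjoint_left.2 (by simp), ?_, ?_⟩
    · rw [Finset.empty_union]; exact mem_indepSets.1 hK
    · rw [Finset.empty_union]; exact mem_indepSets.1 hL
  refine ⟨fun K L => pathRec t ∅ K L, ?_, ?_⟩
  · intro K L hK hL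
    have hh := hPH K L hK hL
    refine ⟨?_, ?_, ?_, ?_⟩
    · rw [pathRec_head?, Finset.empty_union]
    · rw [pathRec_getLast? ht hh, Finset.empty_union]
    · intro I hI
      exact (pathRec_mem ht hh I hI).1
    · exact pathRec_chain' ht hh
  · intro W W' hWmem hP hne
    have hWind : IsIndep G W := mem_indepSets.1 hWmem
    have hZ := Z_pos (G := G) hlam
    have hlt1 : 1 ≤ lamTilde lam := one_le_lamTilde hlam
    have hltpos : 0 < lamTilde lam := lamTilde_pos hlam
    have hl1 : (0:ℝ) < lam + 1 := by linarith
    have hn : 0 < Fintype.card V := by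
      by_contra hc
      push_neg at hc
      have h0 : Fintype.card V = 0 := Nat.le_zero.1 hc
      unfold glauberP at hP
      rw [h0] at hP
      simp at hP
    have hnR : (0:ℝ) < (Fintype.card V : ℝ) := by exact_mod_cast hn
    obtain ⟨v, hvcase⟩ := glauberP_cases hlam hP hne
    obtain ⟨ph0, hdir1, hdir0, hPlow⟩ :
        ∃ ph0 : Bool, (ph0 = true → W' = insert v W ∧ v ∉ W) ∧
          (ph0 = false → W' = W.erase v ∧ v ∈ W) ∧
          hardCore G lam (cond ph0 W' W) ≤
            ((Fintype.card V : ℝ) * (lam + 1)) *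
              (hardCore G lam W * glauberP G lam W W') := by
      have hπ := (hardCore_pos (G := G) hlam W).le
      rcases hvcase with ⟨hvW, hW'⟩ | ⟨hvW, hins, hW'⟩
      · refine ⟨false, by simp, fun _ => ⟨hW', hvW⟩, ?_⟩
        have hge := glauberP_ge_erase (G := G) hlam hvW hW'
        have h2 : ((Fintype.card V : ℝ) * (lam + 1)) *
            (hardCore G lam W * ((1 / (Fintype.card V : ℝ)) * (1 / (lam + 1)))) =
            hardCore G lam W := by
          field_simp
        show hardCore G lam W ≤ _
        calc hardCore G lam W = ((Fintype.card V : ℝ) * (lam + 1)) *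
              (hardCore G lam W * ((1 / (Fintype.card V : ℝ)) * (1 / (lam + 1)))) := h2.symm
          _ ≤ _ := mul_le_mul_of_nonneg_left
              (mul_le_mul_of_nonneg_left hge (hardCore_pos (G := G) hlam W).le) (by positivity)
      · refine ⟨true, fun _ => ⟨hW', hvW⟩, by simp, ?_⟩
        have hge := glauberP_ge_insert (G := G) hlam hvW hins hW'
        have hν : hardCore G lam W' = lam * hardCore G lam W := by
          rw [hW']
          unfold hardCore
          rw [Finset.card_insert_of_notMem hvW, pow_succ]
          ring
        have h2 : ((Fintype.card V : ℝ) * (lam + 1)) *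
            (hardCore G lam W * ((1 / (Fintype.card V : ℝ)) * (lam / (lam + 1)))) =
            lam * hardCore G lam W := by
          field_simp
        show hardCore G lam W' ≤ _
        calc hardCore G lam W' = lam * hardCore G lam W := hν
          _ = ((Fintype.card V : ℝ) * (lam + 1)) *
              (hardCore G lam W * ((1 / (Fintype.card V : ℝ)) * (lam / (lam + 1)))) := h2.symm
          _ ≤ _ := mul_le_mul_of_nonneg_left
              (mul_le_mul_of_nonneg_left hge (hardCore_pos (G := G) hlam W).le) (by positivity)
    set A := t.anc v with hA
    set D := t.done v ph0 with hD
    set U := Finset.univ \ (A ∪ D) with hUdef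
    set Wmax := cond ph0 W' W with hWmaxdef
    have hADdisj : Disjoint A D := disjoint_anc_done ht v ph0
    have hvA : v ∈ A := mem_anc (by rw [htv]; exact Finset.mem_univ v)
    have hvD : v ∉ D := fun hc => Finset.disjoint_left.1 hADdisj hvA hc
    have hvU : v ∉ U := fun hc => (Finset.mem_sdiff.1 hc).2 (Finset.mem_union_left _ hvA)
    have hWmaxDW : Wmax ∩ D = W ∩ D := by
      cases ph0
      · rfl
      · show W' ∩ D = W ∩ D
        rw [(hdir1 rfl).1]
        exact Finset.insert_inter_of_notMem hvD
    have hWmaxUW : Wmax ∩ U = W ∩ U := by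
      cases ph0
      · rfl
      · show W' ∩ U = W ∩ U
        rw [(hdir1 rfl).1]
        exact Finset.insert_inter_of_notMem hvU
    have hWmaxsub : Wmax ⊆ W ∪ W' := by
      cases ph0
      · exact Finset.subset_union_left
      · exact Finset.subset_union_right
    have key : ∀ p : Finset V × Finset V, p.1 ∈ indepSets G → p.2 ∈ indepSets G →
        usesEdge (pathRec t ∅ p.1 p.2) W W' →
        W ∩ D = p.2 ∩ D ∧ W ∩ U = p.1 ∩ U ∧
        ((W ∪ W') ∩ A ⊆ cond ph0 p.2 p.1) ∧
        IsIndep G ((p.1 ∩ D) ∪ (p.2 ∩ U)) := by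
      rintro ⟨K, L⟩ hK hL hu
      obtain ⟨v₁, hv₁, ph₁, b1, b0, hd, hu', hanc', hind'⟩ :=
        pathRec_usesEdge ht (hPH K L hK hL) hu
      obtain ⟨rfl, rfl⟩ := dir_unique hdir1 hdir0 b1 b0
      rw [htv] at hu' hind'
      exact ⟨hd, hu', hanc', hind'⟩
    have hαK : ∀ {K : Finset V}, K ∈ indepSets G →
        (K ∩ A).card ≤ Finset.univ.sup (fun u => alphaOn G (t.anc u)) := by
      intro K hK
      have h1 : K ∩ A ∈ (indepSets G).filter (fun I => I ⊆ A) :=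
        Finset.mem_filter.2 ⟨mem_indepSets.2
          (isIndep_subset (mem_indepSets.1 hK) Finset.inter_subset_left),
          Finset.inter_subset_right⟩
      have h2 : (K ∩ A).card ≤ alphaOn G A := Finset.le_sup h1
      refine h2.trans ?_
      rw [hA]
      exact Finset.le_sup (f := fun u => alphaOn G (t.anc u)) (Finset.mem_univ v)
    -- abbreviations
    set nn : ℝ := (Fintype.card V : ℝ) with hnn
    set lt : ℝ := lamTilde lam with hltdef
    set alf : ℕ := Finset.univ.sup (fun u => alphaOn G (t.anc u)) with half
    set ns : ℕ := Finset.univ.sup (fun u => numIndepOn G (t.anc u)) with hns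
    set x : ℝ := hardCore G lam W * glauberP G lam W W' with hxdef
    have hxpos : 0 < x := mul_pos (hardCore_pos hlam W) hP
    set c : ℝ := 2 * nn * lt ^ (2 * alf) * hardCore G lam Wmax with hcdef
    have hcnn : 0 ≤ c := by
      have := (hardCore_pos (G := G) hlam Wmax).le
      positivity
    unfold congestionAt
    rw [← Finset.sum_product']
    have hterm : ∀ p ∈ indepSets G ×ˢ indepSets G,
        (if usesEdge (pathRec t ∅ p.1 p.2) W W' then
          hardCore G lam p.1 * hardCore G lam p.2 *
            (((pathRec t ∅ p.1 p.2).length - 1 : ℕ) : ℝ) else 0) ≤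
        (if usesEdge (pathRec t ∅ p.1 p.2) W W' then
          c * hardCore G lam ((p.1 ∩ D) ∪ (p.2 ∩ U)) else 0) := by
      rintro ⟨K, L⟩ hp
      rw [Finset.mem_product] at hp
      by_cases hu : usesEdge (pathRec t ∅ K L) W W'
      · rw [if_pos hu, if_pos hu]
        obtain ⟨hWD, hWU, hWDA, hind⟩ := key (K, L) hp.1 hp.2 hu
        have hKA := hαK hp.1
        have hLA := hαK hp.2
        have hWmaxDL : Wmax ∩ D = L ∩ D := hWmaxDW.trans hWD
        have hWmaxUK : Wmax ∩ U = K ∩ U := hWmaxUW.trans hWU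
        have hWmaxA : Wmax ∩ A ⊆ K ∩ A ∨ Wmax ∩ A ⊆ L ∩ A := by
          have hsub2 : Wmax ∩ A ⊆ (W ∪ W') ∩ A :=
            Finset.inter_subset_inter hWmaxsub subset_rfl
          cases hph : ph0
          · left
            intro y hy
            have hy2 := hWDA (hsub2 hy)
            rw [hph] at hy2
            exact Finset.mem_inter.2 ⟨hy2, Finset.mem_of_mem_inter_right hy⟩
          · right
            intro y hy
            have hy2 := hWDA (hsub2 hy)
            rw [hph] at hy2
            exact Finset.mem_inter.2 ⟨hy2, Finset.mem_of_mem_inter_right hy⟩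
        have hw := pair_weight_bound hlam hUdef hADdisj rfl hWmaxDL hWmaxUK hWmaxA hKA hLA
        have hlen : ((pathRec t ∅ K L).length - 1 : ℕ) = K.card + L.card := by
          rw [pathRec_length ht (hPH K L hp.1 hp.2)]
          omega
        have hlenR : (((pathRec t ∅ K L).length - 1 : ℕ) : ℝ) ≤ 2 * nn := by
          rw [hlen, hnn]
          have h1 : K.card ≤ Fintype.card V := Finset.card_le_univ K
          have h2 : L.card ≤ Fintype.card V := Finset.card_le_univ L
          push_cast
          have h1' : (K.card : ℝ) ≤ (Fintype.card V : ℝ) := by exact_mod_cast h1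
          have h2' : (L.card : ℝ) ≤ (Fintype.card V : ℝ) := by exact_mod_cast h2
          linarith
        have hlennn : (0:ℝ) ≤ (((pathRec t ∅ K L).length - 1 : ℕ) : ℝ) := Nat.cast_nonneg _
        have hZZ : (0:ℝ) < Z G lam * Z G lam := mul_pos hZ hZ
        calc hardCore G lam K * hardCore G lam L *
              (((pathRec t ∅ K L).length - 1 : ℕ) : ℝ)
            = lam ^ (K.card + L.card) / (Z G lam * Z G lam) *
              (((pathRec t ∅ K L).length - 1 : ℕ) : ℝ) := by
              unfold hardCore
              rw [div_mul_div_comm, pow_add]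
          _ ≤ lt ^ (2 * alf) * lam ^ (Wmax.card + ((K ∩ D) ∪ (L ∩ U)).card) /
                (Z G lam * Z G lam) * (2 * nn) := by
              refine mul_le_mul ?_ hlenR hlennn (by positivity)
              gcongr
          _ = c * hardCore G lam ((K ∩ D) ∪ (L ∩ U)) := by
              rw [hcdef]
              unfold hardCore
              rw [pow_add]
              ring
      · rw [if_neg hu, if_neg hu]
    have hsum1 := Finset.sum_le_sum hterm
    have hsum2 : ∑ p ∈ indepSets G ×ˢ indepSets G,
        (if usesEdge (pathRec t ∅ p.1 p.2) W W' then
          c * hardCore G lam ((p.1 ∩ D) ∪ (p.2 ∩ U)) else 0) =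
        c * ∑ p ∈ indepSets G ×ˢ indepSets G,
        (if usesEdge (pathRec t ∅ p.1 p.2) W W' then
          hardCore G lam ((p.1 ∩ D) ∪ (p.2 ∩ U)) else 0) := by
      rw [Finset.mul_sum]
      refine Finset.sum_congr rfl fun p _ => ?_
      split
      · rfl
      · rw [mul_zero]
    have hT : ∑ p ∈ indepSets G ×ˢ indepSets G,
        (if usesEdge (pathRec t ∅ p.1 p.2) W W' then
          hardCore G lam ((p.1 ∩ D) ∪ (p.2 ∩ U)) else 0) ≤ ((ns : ℕ) : ℝ) ^ 2 := by
      rw [← Finset.sum_filter]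
      set F : Finset (Finset V) := (indepSets G).filter (fun I => I ⊆ A) with hF
      set Pf := (indepSets G ×ˢ indepSets G).filter
        (fun p => usesEdge (pathRec t ∅ p.1 p.2) W W') with hPf
      have hmemPf : ∀ p ∈ Pf, p.1 ∈ indepSets G ∧ p.2 ∈ indepSets G ∧
          usesEdge (pathRec t ∅ p.1 p.2) W W' := by
        intro p hp
        have := Finset.mem_filter.1 hp
        rw [Finset.mem_product] at this
        exact ⟨this.1.1, this.1.2, this.2⟩
      have hinj : ∀ p ∈ Pf, ∀ q ∈ Pf,
          (fun p : Finset V × Finset V =>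
            ((p.1 ∩ A, p.2 ∩ A), (p.1 ∩ D) ∪ (p.2 ∩ U))) p =
          (fun p : Finset V × Finset V =>
            ((p.1 ∩ A, p.2 ∩ A), (p.1 ∩ D) ∪ (p.2 ∩ U))) q → p = q := by
        intro p hp q hq he
        obtain ⟨hp1, hp2, hpu⟩ := hmemPf p hp
        obtain ⟨hq1, hq2, hqu⟩ := hmemPf q hq
        obtain ⟨hWDp, hWUp, _, _⟩ := key p hp1 hp2 hpu
        obtain ⟨hWDq, hWUq, _, _⟩ := key q hq1 hq2 hqu
        simp only [Prod.mk.injEq] at he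
        obtain ⟨⟨e1, e2⟩, e3⟩ := he
        have r1p := recover_first hUdef hWUp (L := p.2)
        have r1q := recover_first hUdef hWUq (L := q.2)
        have r2p := recover_second hUdef hWDp (K := p.1)
        have r2q := recover_second hUdef hWDq (K := q.1)
        have h1 : p.1 = q.1 := by
          rw [← r1p, ← r1q, e1, e3]
        have h2 : p.2 = q.2 := by
          rw [← r2p, ← r2q, e2, e3]
        exact Prod.ext h1 h2
      calc ∑ p ∈ Pf, hardCore G lam ((p.1 ∩ D) ∪ (p.2 ∩ U))
          = ∑ q ∈ Pf.image (fun p : Finset V × Finset V =>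
              ((p.1 ∩ A, p.2 ∩ A), (p.1 ∩ D) ∪ (p.2 ∩ U))),
              hardCore G lam q.2 :=
            (Finset.sum_image (f := fun q : (Finset V × Finset V) × Finset V => hardCore G lam q.2) hinj).symm
        _ ≤ ∑ q ∈ (F ×ˢ F) ×ˢ indepSets G, hardCore G lam q.2 := by
            refine Finset.sum_le_sum_of_subset_of_nonneg ?_
              (fun q _ _ => (hardCore_pos hlam q.2).le)
            intro q hq
            obtain ⟨p, hp, rfl⟩ := Finset.mem_image.1 hq
            obtain ⟨hp1, hp2, hpu⟩ := hmemPf p hp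
            obtain ⟨_, _, _, hind⟩ := key p hp1 hp2 hpu
            rw [Finset.mem_product, Finset.mem_product]
            refine ⟨⟨?_, ?_⟩, mem_indepSets.2 hind⟩
            · exact Finset.mem_filter.2 ⟨mem_indepSets.2
                (isIndep_subset (mem_indepSets.1 hp1) Finset.inter_subset_left),
                Finset.inter_subset_right⟩
            · exact Finset.mem_filter.2 ⟨mem_indepSets.2
                (isIndep_subset (mem_indepSets.1 hp2) Finset.inter_subset_left),
                Finset.inter_subset_right⟩
        _ = ∑ a ∈ F ×ˢ F, ∑ h ∈ indepSets G, hardCore G lam h := by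
            rw [Finset.sum_product]
        _ = ∑ a ∈ F ×ˢ F, (1:ℝ) :=
            Finset.sum_congr rfl (fun _ _ => sum_hardCore hlam)
        _ = ((F ×ˢ F).card : ℝ) := by rw [Finset.sum_const, nsmul_eq_mul, mul_one]
        _ = ((F.card : ℝ)) ^ 2 := by rw [Finset.card_product]; push_cast; ring
        _ ≤ ((ns : ℕ) : ℝ) ^ 2 := by
            have h1 : F.card ≤ ns := by
              have h2 : F.card = numIndepOn G (t.anc v) := rfl
              rw [h2, hns]
              exact Finset.le_sup (f := fun u => numIndepOn G (t.anc u)) (Finset.mem_univ v)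
            have h1' : (F.card : ℝ) ≤ ((ns : ℕ) : ℝ) := by exact_mod_cast h1
            exact pow_le_pow_left₀ (Nat.cast_nonneg _) h1' 2
    -- put it together
    have hSle : ∑ p ∈ indepSets G ×ˢ indepSets G,
        (if usesEdge (pathRec t ∅ p.1 p.2) W W' then
          hardCore G lam p.1 * hardCore G lam p.2 *
            (((pathRec t ∅ p.1 p.2).length - 1 : ℕ) : ℝ) else 0) ≤
        x * (4 * nn ^ 2 * lt ^ (2 * alf + 1) * ((ns : ℕ) : ℝ) ^ 2) := by
      refine le_trans hsum1 ?_
      rw [hsum2]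
      have step1 : c * ∑ p ∈ indepSets G ×ˢ indepSets G,
          (if usesEdge (pathRec t ∅ p.1 p.2) W W' then
            hardCore G lam ((p.1 ∩ D) ∪ (p.2 ∩ U)) else 0) ≤ c * ((ns : ℕ) : ℝ) ^ 2 :=
        mul_le_mul_of_nonneg_left hT hcnn
      refine le_trans step1 ?_
      have hns2 : (0:ℝ) ≤ ((ns : ℕ) : ℝ) ^ 2 := by positivity
      have step2 : c ≤ 2 * nn * lt ^ (2 * alf) * ((nn * (lam + 1)) * x) := by
        rw [hcdef]
        exact mul_le_mul_of_nonneg_left hPlow (by positivity)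
      have step3 : 2 * nn * lt ^ (2 * alf) * ((nn * (lam + 1)) * x) ≤
          x * (4 * nn ^ 2 * lt ^ (2 * alf + 1)) := by
        have hlam2 : lam + 1 ≤ 2 * lt := by
          have h1 : lam ≤ lt := le_max_left _ _
          linarith
        have e1 : 2 * nn * lt ^ (2 * alf) * ((nn * (lam + 1)) * x) =
            x * (2 * nn ^ 2 * lt ^ (2 * alf) * (lam + 1)) := by ring
        have e2 : x * (4 * nn ^ 2 * lt ^ (2 * alf + 1)) =
            x * (2 * nn ^ 2 * lt ^ (2 * alf) * (2 * lt)) := by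
          rw [pow_succ]
          ring
        rw [e1, e2]
        refine mul_le_mul_of_nonneg_left ?_ hxpos.le
        exact mul_le_mul_of_nonneg_left hlam2 (by positivity)
      calc c * ((ns : ℕ) : ℝ) ^ 2
          ≤ (2 * nn * lt ^ (2 * alf) * ((nn * (lam + 1)) * x)) * ((ns : ℕ) : ℝ) ^ 2 :=
            mul_le_mul_of_nonneg_right step2 hns2
        _ ≤ (x * (4 * nn ^ 2 * lt ^ (2 * alf + 1))) * ((ns : ℕ) : ℝ) ^ 2 :=
            mul_le_mul_of_nonneg_right step3 hns2
        _ = x * (4 * nn ^ 2 * lt ^ (2 * alf + 1) * ((ns : ℕ) : ℝ) ^ 2) := by ring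
    have hfinal : 1 / x * (∑ p ∈ indepSets G ×ˢ indepSets G,
        (if usesEdge (pathRec t ∅ p.1 p.2) W W' then
          hardCore G lam p.1 * hardCore G lam p.2 *
            (((pathRec t ∅ p.1 p.2).length - 1 : ℕ) : ℝ) else 0)) ≤
        4 * nn ^ 2 * lt ^ (2 * alf + 1) * ((ns : ℕ) : ℝ) ^ 2 := by
      have h1 := mul_le_mul_of_nonneg_left hSle (le_of_lt (by positivity : (0:ℝ) < 1 / x))
      rwa [← mul_assoc, one_div_mul_cancel (ne_of_gt hxpos), one_mul] at h1
    exact hfinal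
end

section
/- For every tree T with n ≥ 1 vertices, the pathwidth of T is at most log₂(n). -/
open Finset

section Decomp

variable {V : Type*} [Fintype V] [DecidableEq V]

/-- `X : Fin p → Finset V` is a path decomposition of `G`. -/
def IsPathDecomp (G : SimpleGraph V) (p : ℕ) (X : Fin p → Finset V) : Prop :=
  (∀ v : V, ∃ i, v ∈ X i) ∧
  (∀ u v : V, G.Adj u v → ∃ i, u ∈ X i ∧ v ∈ X i) ∧
  (∀ v : V, ∀ i j k : Fin p, i ≤ j → j ≤ k → v ∈ X i → v ∈ X k → v ∈ X j)

/-- The pathwidth of `G` : the least `w` such that `G` has a path decomposition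
with all bags of size at most `w + 1`. -/
noncomputable def pathwidth (G : SimpleGraph V) : ℕ :=
  sInf {w : ℕ | ∃ (p : ℕ) (X : Fin p → Finset V),
    IsPathDecomp G p X ∧ ∀ i, (X i).card ≤ w + 1}

/-- `(T, X)` is a tree decomposition of `G`. -/
def IsTreeDecomp {ι : Type*} (G : SimpleGraph V) (T : SimpleGraph ι) (X : ι → Finset V) : Prop :=
  T.IsTree ∧
  (∀ v : V, ∃ t, v ∈ X t) ∧
  (∀ u v : V, G.Adj u v → ∃ t, u ∈ X t ∧ v ∈ X t) ∧
  (∀ v : V, (T.induce {t | v ∈ X t}).Connected)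

/-- The treewidth of `G`. -/
noncomputable def treewidth (G : SimpleGraph V) : ℕ :=
  sInf {w : ℕ | ∃ (m : ℕ) (T : SimpleGraph (Fin m)) (X : Fin m → Finset V),
    IsTreeDecomp G T X ∧ ∀ t, (X t).card ≤ w + 1}

end Decomp

set_option linter.unusedSectionVars false
set_option linter.unusedVariables false

namespace PWAux

open Relation SimpleGraph

variable {V : Type*} [Fintype V] [DecidableEq V] (T : SimpleGraph V)

def Step (A : Finset V) (x y : V) : Prop := x ∈ A ∧ y ∈ A ∧ T.Adj x y

def Reach (A : Finset V) : V → V → Prop := Relation.ReflTransGen (Step T A)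

variable {T}

lemma reach_refl {A : Finset V} (u : V) : Reach T A u u := ReflTransGen.refl

lemma reach_symm {A : Finset V} {u v : V} (h : Reach T A u v) : Reach T A v u := by
  refine @Std.Symm.symm _ _ (@Relation.ReflTransGen.stdSymm _ _ ⟨?_⟩) _ _ h
  rintro x y ⟨hx, hy, hadj⟩; exact ⟨hy, hx, hadj.symm⟩

lemma reach_trans {A : Finset V} {u v w : V} (h1 : Reach T A u v) (h2 : Reach T A v w) :
    Reach T A u w := ReflTransGen.trans h1 h2

lemma reach_mono {A B : Finset V} (hAB : A ⊆ B) {u v : V} (h : Reach T A u v) : Reach T B u v :=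
  ReflTransGen.mono (r := Step T A) (p := Step T B) (fun x y h => ⟨hAB h.1, hAB h.2.1, h.2.2⟩) _ _ h

lemma reach_endpoints {A : Finset V} {u v : V} (h : Reach T A u v) :
    u = v ∨ (u ∈ A ∧ v ∈ A) := by
  induction h with
  | refl => exact Or.inl rfl
  | tail hab hbc ih =>
      right
      rcases ih with rfl | ⟨hu, _⟩
      exacts [⟨hbc.1, hbc.2.1⟩, ⟨hu, hbc.2.1⟩]

variable (T)

noncomputable def comp (A : Finset V) (u : V) : Finset V :=
  @Finset.filter _ (fun x => Reach T A u x) (Classical.decPred _) A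

variable {T}

lemma mem_comp {A : Finset V} {u x : V} : x ∈ comp T A u ↔ x ∈ A ∧ Reach T A u x := by
  simp [comp, Finset.mem_filter]

lemma comp_subset {A : Finset V} {u : V} : comp T A u ⊆ A :=
  fun x hx => (mem_comp.1 hx).1

lemma mem_comp_self {A : Finset V} {u : V} (h : u ∈ A) : u ∈ comp T A u :=
  mem_comp.2 ⟨h, reach_refl u⟩

lemma comp_eq_of_mem {A : Finset V} {u v : V} (h : v ∈ comp T A u) :
    comp T A v = comp T A u := by
  rcases mem_comp.1 h with ⟨hvA, hr⟩
  ext x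
  simp only [mem_comp]
  exact ⟨fun ⟨hx, h2⟩ => ⟨hx, reach_trans hr h2⟩,
    fun ⟨hx, h2⟩ => ⟨hx, reach_trans (reach_symm hr) h2⟩⟩

lemma reach_in_comp {A : Finset V} {u v : V} (hu : u ∈ A) (h : Reach T A u v) :
    Reach T (comp T A u) u v := by
  induction h with
  | refl => exact ReflTransGen.refl
  | @tail b c hab hbc ih =>
      exact ih.tail ⟨mem_comp.2 ⟨hbc.1, hab⟩, mem_comp.2 ⟨hbc.2.1, hab.tail hbc⟩, hbc.2.2⟩

lemma exists_exit {C : Finset V} {c v : V} (h : Reach T C c v) (hv : v ≠ c) :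
    ∃ w, T.Adj c w ∧ w ∈ C ∧ Reach T (C.erase c) w v := by
  induction h with
  | refl => exact absurd rfl hv
  | @tail b v' hab hbc ih =>
      rcases eq_or_ne b c with rfl | hbne
      · exact ⟨v', hbc.2.2, hbc.2.1, ReflTransGen.refl⟩
      · obtain ⟨w, hadj, hwC, hr⟩ := ih hbne
        exact ⟨w, hadj, hwC, hr.tail ⟨mem_erase.2 ⟨hbne, hbc.1⟩, mem_erase.2 ⟨hv, hbc.2.1⟩,
          hbc.2.2⟩⟩


lemma reach_to_walk {A : Finset V} {u v : V} (hu : u ∈ A) (h : Reach T A u v) :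
    ∃ w : T.Walk u v, ∀ x ∈ w.support, x ∈ A := by
  induction h with
  | refl => exact ⟨SimpleGraph.Walk.nil, by simp [hu]⟩
  | @tail b c hab hbc ih =>
      obtain ⟨w, hw⟩ := ih
      refine ⟨w.append (SimpleGraph.Walk.cons hbc.2.2 SimpleGraph.Walk.nil), ?_⟩
      intro x hx
      rw [SimpleGraph.Walk.support_append] at hx
      rcases List.mem_append.1 hx with hx | hx
      · exact hw x hx
      · simp only [SimpleGraph.Walk.support_cons, SimpleGraph.Walk.support_nil,
          List.tail_cons, List.mem_singleton] at hx
        subst hx; exact hbc.2.1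

lemma adj_unique (hT : T.IsAcyclic) {A : Finset V} {c w w' : V} (hc : c ∉ A)
    (h1 : T.Adj c w) (h2 : T.Adj c w') (hwA : w ∈ A) (hr : Reach T A w w') : w = w' := by
  by_contra hne
  obtain ⟨p, hp⟩ := reach_to_walk hwA hr
  have hcp : c ∉ p.bypass.support := fun hcc => hc (hp c (p.support_bypass_subset hcc))
  have path1 : (SimpleGraph.Walk.cons h2 SimpleGraph.Walk.nil : T.Walk c w').IsPath := by
    simp [SimpleGraph.Walk.isPath_iff_eq_nil, h2.ne]
  have path2 : (SimpleGraph.Walk.cons h1 p.bypass).IsPath :=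
    (p.bypass_isPath).cons hcp
  have heq := SimpleGraph.isAcyclic_iff_path_unique.1 hT ⟨_, path1⟩ ⟨_, path2⟩
  have heq' : (SimpleGraph.Walk.cons h2 SimpleGraph.Walk.nil : T.Walk c w')
      = SimpleGraph.Walk.cons h1 p.bypass := congrArg Subtype.val heq
  have hw : w ∈ (SimpleGraph.Walk.cons h1 p.bypass).support := by
    simp [SimpleGraph.Walk.support_cons, SimpleGraph.Walk.start_mem_support]
  rw [← heq'] at hw
  simp only [SimpleGraph.Walk.support_cons, SimpleGraph.Walk.support_nil,
    List.mem_cons, List.mem_singleton] at hw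
  rcases hw with hw | hw | hw
  · exact h1.ne hw.symm
  · exact hne hw
  · exact absurd hw (by simp)


lemma centroid (hT : T.IsAcyclic) {C : Finset V} (hne : C.Nonempty)
    (hconn : ∀ u ∈ C, ∀ w ∈ C, Reach T C u w) :
    ∃ c ∈ C, ∀ v ∈ C.erase c, 2 * (comp T (C.erase c) v).card ≤ C.card := by
  obtain ⟨c, hcC, hmin⟩ :=
    C.exists_min_image (fun c => (C.erase c).sup fun v => (comp T (C.erase c) v).card) hne
  refine ⟨c, hcC, fun v₀ hv₀ => ?_⟩
  by_contra hbig
  push_neg at hbig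
  set D : Finset V := comp T (C.erase c) v₀ with hD
  have hv₀D : v₀ ∈ D := mem_comp_self hv₀
  have hv₀C : v₀ ∈ C := (mem_erase.1 hv₀).2
  have hv₀c : v₀ ≠ c := (mem_erase.1 hv₀).1
  -- find a neighbour c' of c inside D
  obtain ⟨c', hadj, hc'C, hr⟩ := exists_exit (hconn c hcC v₀ hv₀C) hv₀c
  have hc'D : c' ∈ D := mem_comp.2 ⟨mem_erase.2 ⟨hadj.ne', hc'C⟩, reach_symm hr⟩
  have hDc' : comp T (C.erase c) c' = D := comp_eq_of_mem hc'D
  set B : Finset V := C.erase c' with hB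
  have hcB : c ∈ B := mem_erase.2 ⟨hadj.ne, hcC⟩
  have hDsub : D ⊆ C.erase c := comp_subset
  have hcD : c ∉ D := fun h => (mem_erase.1 (hDsub h)).1 rfl
  -- reach within D
  have hreachD : ∀ x ∈ D, ∀ y ∈ D, Reach T (C.erase c) x y := fun x hx y hy =>
    reach_trans (reach_symm (mem_comp.1 hx).2) (mem_comp.1 hy).2
  -- claim 1 : nothing in D is reachable from c in B
  have claim1 : ∀ v, Reach T B c v → v ∈ D → False := by
    intro v hv
    induction hv with
    | refl => exact fun h => hcD h
    | @tail b v' hab hbc ih =>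
        intro hv'D
        have hbD : b ∉ D := fun h => ih h
        rcases eq_or_ne b c with rfl | hbne
        · -- v' adjacent to c, v' ∈ D: then v' = c' by uniqueness, contra v' ∈ B
          have : v' = c' := adj_unique hT (fun h => (mem_erase.1 h).1 rfl)
            hbc.2.2 hadj (hDsub hv'D) (hreachD v' hv'D c' hc'D)
          exact (mem_erase.1 hbc.2.1).1 this
        · -- b and v' both in C.erase c, adjacent, so b ∈ D
          have hbCc : b ∈ C.erase c := mem_erase.2 ⟨hbne, (mem_erase.1 hbc.1).2⟩
          have hv'Cc : v' ∈ C.erase c := hDsub hv'D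
          exact hbD (mem_comp.2 ⟨hbCc,
            reach_trans (mem_comp.1 hv'D).2 (ReflTransGen.single ⟨hv'Cc, hbCc, hbc.2.2.symm⟩)⟩)
  -- claim 2 : any vertex of C outside D (other than c) can reach c in B
  have claim2 : ∀ v ∈ C, v ∉ D → v ≠ c → Reach T B v c := by
    intro v hvC hvD hvc
    obtain ⟨w, hwadj, hwC, hwr⟩ := exists_exit (hconn c hcC v hvC) hvc
    have hwCc : w ∈ C.erase c := mem_erase.2 ⟨hwadj.ne', hwC⟩
    have hvcomp : v ∈ comp T (C.erase c) w := mem_comp.2 ⟨mem_erase.2 ⟨hvc, hvC⟩, hwr⟩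
    have hc'w : c' ∉ comp T (C.erase c) w := by
      intro h
      exact hvD (by rw [← hDc', comp_eq_of_mem h]; exact hvcomp)
    have hcompB : comp T (C.erase c) w ⊆ B := by
      intro x hx
      refine mem_erase.2 ⟨fun h => hc'w (h ▸ hx), (mem_erase.1 (comp_subset hx)).2⟩
    have hwB : w ∈ B := hcompB (mem_comp_self hwCc)
    have h1 : Reach T B w v := reach_mono hcompB (reach_in_comp hwCc hwr)
    exact (reach_symm h1).tail ⟨hwB, hcB, hwadj.symm⟩
  -- every component of B is smaller than D
  have hsmall : ∀ u ∈ B, (comp T B u).card < D.card := by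
    intro u huB
    by_cases hreach : Reach T B u c
    · -- component of u contains c ; it is disjoint from D
      have hdisj : Disjoint (comp T B u) D := by
        rw [Finset.disjoint_left]
        intro x hx hxD
        exact claim1 x (reach_trans (reach_symm hreach) (mem_comp.1 hx).2) hxD
      have hsub : comp T B u ∪ D ⊆ C := by
        intro x hx
        rcases Finset.mem_union.1 hx with hx | hx
        · exact (mem_erase.1 (comp_subset hx)).2
        · exact (mem_erase.1 (hDsub hx)).2
      have := Finset.card_le_card hsub
      rw [Finset.card_union_of_disjoint hdisj] at this
      omega
    · -- component of u is inside D.erase c'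
      have hsub : comp T B u ⊆ D.erase c' := by
        intro x hx
        have hxB : x ∈ B := comp_subset hx
        have hxr : Reach T B u x := (mem_comp.1 hx).2
        have hxD : x ∈ D := by
          by_contra hxD
          have hxc : x ≠ c := fun h => hreach (h ▸ hxr)
          exact hreach (reach_trans hxr (claim2 x (mem_erase.1 hxB).2 hxD hxc))
        exact mem_erase.2 ⟨(mem_erase.1 hxB).1, hxD⟩
      have h1 := Finset.card_le_card hsub
      have h2 := Finset.card_erase_of_mem hc'D
      have h3 : 0 < D.card := Finset.card_pos.2 ⟨v₀, hv₀D⟩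
      omega
  have hle1 : D.card ≤ (C.erase c).sup fun v => (comp T (C.erase c) v).card :=
    Finset.le_sup (f := fun v => (comp T (C.erase c) v).card) hv₀
  have hle2 := hmin c' hc'C
  have hlt : ((C.erase c').sup fun v => (comp T (C.erase c') v).card) < D.card := by
    rw [Finset.sup_lt_iff (Finset.card_pos.2 ⟨v₀, hv₀D⟩)]
    exact hsmall
  omega


variable (T)

def Good (A : Finset V) (p : ℕ) (X : ℕ → Finset V) : Prop :=
  (∀ v ∈ A, ∃ i, i < p ∧ v ∈ X i) ∧
  (∀ i, X i ⊆ A) ∧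
  (∀ u v : V, T.Adj u v → u ∈ A → v ∈ A → ∃ i, i < p ∧ u ∈ X i ∧ v ∈ X i) ∧
  (∀ (v : V) (i j k : ℕ), i ≤ j → j ≤ k → v ∈ X i → v ∈ X k → v ∈ X j)

variable {T}

lemma good_empty : Good T ∅ 0 (fun _ => ∅) := by
  refine ⟨by simp, by simp, by simp, by simp⟩

lemma good_insert {A : Finset V} {c : V} {p : ℕ} {X : ℕ → Finset V} (h : Good T A p X) :
    Good T (insert c A) (max p 1) (fun i => insert c (X i)) := by
  obtain ⟨hcov, hsub, hedge, hint⟩ := h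
  refine ⟨?_, ?_, ?_, ?_⟩
  · intro v hv
    rcases Finset.mem_insert.1 hv with rfl | hv
    · exact ⟨0, by omega, Finset.mem_insert_self _ _⟩
    · obtain ⟨i, hi, hm⟩ := hcov v hv
      exact ⟨i, by omega, Finset.mem_insert_of_mem hm⟩
  · intro i
    exact Finset.insert_subset_insert c (hsub i)
  · intro u v huv hu hv
    by_cases huc : u = c
    · subst huc
      have hvA : v ∈ A := by
        rcases Finset.mem_insert.1 hv with rfl | hv
        · exact ((T.loopless.irrefl _) huv).elim
        · exact hv
      obtain ⟨i, hi, hm⟩ := hcov v hvA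
      exact ⟨i, by omega, Finset.mem_insert_self _ _, Finset.mem_insert_of_mem hm⟩
    by_cases hvc : v = c
    · subst hvc
      have huA : u ∈ A := by
        rcases Finset.mem_insert.1 hu with rfl | h
        · exact ((T.loopless.irrefl _) huv).elim
        · exact h
      obtain ⟨i, hi, hm⟩ := hcov u huA
      exact ⟨i, by omega, Finset.mem_insert_of_mem hm, Finset.mem_insert_self _ _⟩
    · have huA : u ∈ A := by
        rcases Finset.mem_insert.1 hu with rfl | h
        exacts [absurd rfl huc, h]
      have hvA : v ∈ A := by
        rcases Finset.mem_insert.1 hv with rfl | h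
        exacts [absurd rfl hvc, h]
      obtain ⟨i, hi, hm1, hm2⟩ := hedge u v huv huA hvA
      exact ⟨i, by omega, Finset.mem_insert_of_mem hm1, Finset.mem_insert_of_mem hm2⟩
  · intro v i j k hij hjk hi hk
    rcases Finset.mem_insert.1 hi with rfl | hi
    · exact Finset.mem_insert_self _ _
    rcases Finset.mem_insert.1 hk with h | hk
    · exact h ▸ Finset.mem_insert_self _ _
    · exact Finset.mem_insert_of_mem (hint v i j k hij hjk hi hk)

lemma good_concat {A₁ A₂ : Finset V} {p₁ p₂ : ℕ} {X₁ X₂ : ℕ → Finset V}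
    (h1 : Good T A₁ p₁ X₁) (h2 : Good T A₂ p₂ X₂)
    (hdis : ∀ x ∈ A₁, x ∉ A₂) (hedge : ∀ u ∈ A₁, ∀ v ∈ A₂, ¬ T.Adj u v) :
    Good T (A₁ ∪ A₂) (p₁ + p₂) (fun i => if i < p₁ then X₁ i else X₂ (i - p₁)) := by
  obtain ⟨hcov1, hsub1, hedge1, hint1⟩ := h1
  obtain ⟨hcov2, hsub2, hedge2, hint2⟩ := h2
  set Z : ℕ → Finset V := fun i => if i < p₁ then X₁ i else X₂ (i - p₁) with hZ
  have hZpos : ∀ i, i < p₁ → Z i = X₁ i := fun i h => if_pos h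
  have hZneg : ∀ i, ¬ i < p₁ → Z i = X₂ (i - p₁) := fun i h => if_neg h
  have hmem : ∀ (v : V) (i : ℕ), v ∈ Z i →
      (i < p₁ ∧ v ∈ X₁ i ∧ v ∈ A₁) ∨ (¬ i < p₁ ∧ v ∈ X₂ (i - p₁) ∧ v ∈ A₂) := by
    intro v i hv
    by_cases h : i < p₁
    · rw [hZpos i h] at hv; exact Or.inl ⟨h, hv, hsub1 i hv⟩
    · rw [hZneg i h] at hv; exact Or.inr ⟨h, hv, hsub2 _ hv⟩
  refine ⟨?_, ?_, ?_, ?_⟩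
  · intro v hv
    rcases Finset.mem_union.1 hv with hv | hv
    · obtain ⟨i, hi, hm⟩ := hcov1 v hv
      exact ⟨i, by omega, by rw [hZpos i hi]; exact hm⟩
    · obtain ⟨i, hi, hm⟩ := hcov2 v hv
      refine ⟨p₁ + i, by omega, ?_⟩
      rw [hZneg (p₁ + i) (by omega)]
      simpa using hm
  · intro i x hx
    rcases hmem x i hx with ⟨_, _, h⟩ | ⟨_, _, h⟩
    · exact Finset.mem_union_left _ h
    · exact Finset.mem_union_right _ h
  · intro u v huv hu hv
    rcases Finset.mem_union.1 hu with hu | hu <;> rcases Finset.mem_union.1 hv with hv | hv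
    · obtain ⟨i, hi, hm1, hm2⟩ := hedge1 u v huv hu hv
      exact ⟨i, by omega, by rw [hZpos i hi]; exact hm1, by rw [hZpos i hi]; exact hm2⟩
    · exact absurd huv (hedge u hu v hv)
    · exact absurd huv.symm (hedge v hv u hu)
    · obtain ⟨i, hi, hm1, hm2⟩ := hedge2 u v huv hu hv
      refine ⟨p₁ + i, by omega, ?_, ?_⟩ <;> rw [hZneg (p₁ + i) (by omega)] <;>
        simpa using (by assumption : _ ∈ X₂ i)
  · intro v i j k hij hjk hi hk
    rcases hmem v i hi with ⟨hip, hvi, hA1⟩ | ⟨hip, hvi, hA2⟩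
    · rcases hmem v k hk with ⟨hkp, hvk, _⟩ | ⟨hkp, hvk, hA2⟩
      · have hjp : j < p₁ := by omega
        rw [hZpos j hjp]
        exact hint1 v i j k hij hjk hvi hvk
      · exact absurd hA2 (hdis v hA1)
    · rcases hmem v k hk with ⟨hkp, hvk, hA1⟩ | ⟨hkp, hvk, _⟩
      · omega
      · have hjp : ¬ j < p₁ := by omega
        rw [hZneg j hjp]
        exact hint2 v (i - p₁) (j - p₁) (k - p₁) (by omega) (by omega) hvi hvk


lemma key (hT : T.IsAcyclic) :
    ∀ (n : ℕ) (A : Finset V), A.card ≤ n →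
    ∀ m : ℕ, (∀ v ∈ A, (comp T A v).card ≤ m) →
    ∃ (p : ℕ) (X : ℕ → Finset V), Good T A p X ∧ ∀ i, (X i).card ≤ Nat.log 2 m + 1 := by
  intro n
  induction n with
  | zero =>
      intro A hA m hm
      rw [Nat.le_zero, Finset.card_eq_zero] at hA
      subst hA
      exact ⟨0, fun _ => ∅, good_empty, fun i => by simp⟩
  | succ n ih =>
      intro A hA m hm
      rcases A.eq_empty_or_nonempty with rfl | ⟨v, hv⟩
      · exact ⟨0, fun _ => ∅, good_empty, fun i => by simp⟩
      set C : Finset V := comp T A v with hCdef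
      have hvC : v ∈ C := mem_comp_self hv
      have hCA : C ⊆ A := comp_subset
      have hCm : C.card ≤ m := hm v hv
      have hconn : ∀ u ∈ C, ∀ w ∈ C, Reach T C u w := by
        intro u hu w hw
        exact reach_trans (reach_symm (reach_in_comp hv (mem_comp.1 hu).2))
          (reach_in_comp hv (mem_comp.1 hw).2)
      obtain ⟨c, hcC, hcent⟩ := centroid hT ⟨v, hvC⟩ hconn
      -- recursive call on C.erase c with bound m / 2
      have h1 : (C.erase c).card ≤ n := by
        have := Finset.card_erase_of_mem hcC
        have h2 := Finset.card_le_card hCA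
        have h3 : 0 < C.card := Finset.card_pos.2 ⟨c, hcC⟩
        omega
      have hm1 : ∀ u ∈ C.erase c, (comp T (C.erase c) u).card ≤ m / 2 := by
        intro u hu
        have := hcent u hu
        omega
      obtain ⟨p₂, X₂, hg2, hb2⟩ := ih (C.erase c) h1 (m / 2) hm1
      -- recursive call on A \ C
      have h2 : (A \ C).card ≤ n := by
        rw [Finset.card_sdiff_of_subset hCA]
        have h3 : 0 < C.card := Finset.card_pos.2 ⟨c, hcC⟩
        have := Finset.card_le_card hCA
        omega
      have hm2 : ∀ u ∈ A \ C, (comp T (A \ C) u).card ≤ m := by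
        intro u hu
        refine le_trans (Finset.card_le_card ?_) (hm u (Finset.mem_sdiff.1 hu).1)
        intro x hx
        rcases mem_comp.1 hx with ⟨hxA, hr⟩
        exact mem_comp.2 ⟨(Finset.mem_sdiff.1 hxA).1, reach_mono Finset.sdiff_subset hr⟩
      obtain ⟨p₁, X₁, hg1, hb1⟩ := ih (A \ C) h2 m hm2
      -- add c back
      have hgC : Good T C (max p₂ 1) (fun i => insert c (X₂ i)) := by
        have h := good_insert (c := c) hg2
        rwa [Finset.insert_erase hcC] at h
      have hbC : ∀ i, (insert c (X₂ i)).card ≤ Nat.log 2 m + 1 := by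
        intro i
        have hle := Finset.card_insert_le c (X₂ i)
        rcases le_or_gt 2 m with hm2' | hm2'
        · have hlog : Nat.log 2 (m / 2) = Nat.log 2 m - 1 := Nat.log_div_base 2 m
          have hpos : 0 < Nat.log 2 m := Nat.log_pos (by norm_num) hm2'
          have := hb2 i
          omega
        · -- m ≤ 1 : then C = {c} and X₂ i = ∅
          have hC1 : C.card ≤ 1 := le_trans hCm (by omega)
          have : X₂ i ⊆ C.erase c := hg2.2.1 i
          have hcard := Finset.card_le_card this
          have := Finset.card_erase_of_mem hcC
          omega
      -- concatenate
      have hdis : ∀ x ∈ C, x ∉ A \ C := fun x hx hx' => (Finset.mem_sdiff.1 hx').2 hx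
      have hedge : ∀ u ∈ C, ∀ w ∈ A \ C, ¬ T.Adj u w := by
        intro u hu w hw hadj
        refine (Finset.mem_sdiff.1 hw).2 ?_
        rcases mem_comp.1 hu with ⟨huA, hru⟩
        exact mem_comp.2 ⟨(Finset.mem_sdiff.1 hw).1,
          reach_trans hru (ReflTransGen.single ⟨huA, (Finset.mem_sdiff.1 hw).1, hadj⟩)⟩
      have hcon := good_concat hgC hg1 hdis hedge
      rw [Finset.union_sdiff_of_subset hCA] at hcon
      refine ⟨max p₂ 1 + p₁, _, hcon, ?_⟩
      intro i
      by_cases h : i < max p₂ 1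
      · rw [if_pos h]; exact hbC i
      · rw [if_neg h]; exact hb1 _

end PWAux

/-- For every tree `T` on `n ≥ 1` vertices, the pathwidth of `T` is at most
`log₂ n`. -/
theorem statement_18 (V : Type) [Fintype V] [DecidableEq V] (T : SimpleGraph V)
    (hT : T.IsTree) (hn : 1 ≤ Fintype.card V) :
    (pathwidth T : ℝ) ≤ Real.logb 2 (Fintype.card V) := by
  obtain ⟨p, X, hg, hb⟩ := PWAux.key hT.2 (Fintype.card V) Finset.univ
    (by simp [Finset.card_univ]) (Fintype.card V)
    (fun v _ => Finset.card_le_univ _)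
  have hpw : pathwidth T ≤ Nat.log 2 (Fintype.card V) := by
    apply Nat.sInf_le
    refine ⟨p, fun i => X i.val, ⟨?_, ?_, ?_⟩, fun i => hb i.val⟩
    · intro v
      obtain ⟨i, hi, hm⟩ := hg.1 v (Finset.mem_univ v)
      exact ⟨⟨i, hi⟩, hm⟩
    · intro u v huv
      obtain ⟨i, hi, hm1, hm2⟩ := hg.2.2.1 u v huv (Finset.mem_univ u) (Finset.mem_univ v)
      exact ⟨⟨i, hi⟩, hm1, hm2⟩
    · intro v i j k hij hjk hi hk
      exact hg.2.2.2 v i.val j.val k.val hij hjk hi hk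
  calc (pathwidth T : ℝ) ≤ (Nat.log 2 (Fintype.card V) : ℝ) := by exact_mod_cast hpw
    _ ≤ Real.logb 2 (Fintype.card V) := by
        simpa using Real.natLog_le_logb (Fintype.card V) 2
end
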